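/- arXiv:2510.09429 — 4 statements merged into one kernel-verified Lean document; each statement's English description precedes it below -/
import Mathlib

section
/- If the order-reversing permutation w_0 sending i to n+1-i induces an automorphism of the labeled graph G (preserving adjacency of labels), then MTub(G) is self-dual. In particular MTub(P_n) and MTub(C_n) are self-dual, where P_n is the path 1-2-...-n and C_n is the cycle 1-2-...-n-1. -/
open Finset

section TubingDefs

variable {n : ℕ}

/-- A tube of a graph: a nonempty vertex subset inducing a connected subgraph. -/
def IsTube (G : SimpleGraph (Fin n)) (X : Finset (Fin n)) : Prop :=
  X.Nonempty ∧ (G.induce (X : Set (Fin n))).Connected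

/-- Tubes are compatible if nested or with disconnected union. -/
def TubeCompatible (G : SimpleGraph (Fin n)) (X Y : Finset (Fin n)) : Prop :=
  X ⊆ Y ∨ Y ⊆ X ∨ ¬ IsTube G (X ∪ Y)

def IsTubing (G : SimpleGraph (Fin n)) (T : Finset (Finset (Fin n))) : Prop :=
  (∀ X ∈ T, IsTube G X) ∧ ∀ X ∈ T, ∀ Y ∈ T, TubeCompatible G X Y

def IsMaxTubing (G : SimpleGraph (Fin n)) (T : Finset (Finset (Fin n))) : Prop :=
  IsTubing G T ∧ ∀ T', IsTubing G T' → T ⊆ T' → T' = T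

/-- The smallest tube of `T` containing `x`: the intersection of all tubes of `T`
containing `x`. -/
def tubingDown (T : Finset (Finset (Fin n))) (x : Fin n) : Finset (Fin n) :=
  Finset.univ.filter (fun y => ∀ X ∈ T, x ∈ X → y ∈ X)

/-- The G-tree order of a tubing: `x ≤_T y` iff `x` lies in the smallest tube containing `y`. -/
def treeLE (T : Finset (Finset (Fin n))) (x y : Fin n) : Prop :=
  x ∈ tubingDown T y

/-- `y` covers `x` in the G-tree order of `T`. -/
def TreeCovBy (T : Finset (Finset (Fin n))) (x y : Fin n) : Prop :=
  treeLE T x y ∧ x ≠ y ∧ ∀ z, treeLE T x z → treeLE T z y → z = x ∨ z = y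

/-- Flip cover relation on maximal tubings: exchange exactly one tube, with the
top (least-nested) element of the exchanged tube increasing. -/
def FlipCover (G : SimpleGraph (Fin n)) (T J : Finset (Finset (Fin n))) : Prop :=
  IsMaxTubing G T ∧ IsMaxTubing G J ∧
  ∃ X Y, X ∈ T ∧ Y ∈ J ∧ X ≠ Y ∧ T.erase X = J.erase Y ∧
    ∃ x y : Fin n, tubingDown T x = X ∧ tubingDown J y = Y ∧ x < y

/-- The order of the poset of maximal tubings, generated by flip covers. -/
def MTubLE (G : SimpleGraph (Fin n)) :
    Finset (Finset (Fin n)) → Finset (Finset (Fin n)) → Prop :=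
  Relation.ReflTransGen (FlipCover G)

/-- Inversions: pairs `i < j` with `j <_T i` in the G-tree. -/
def invSet (T : Finset (Finset (Fin n))) : Set (Fin n × Fin n) :=
  {p | p.1 < p.2 ∧ treeLE T p.2 p.1}

/-- Coinversions: pairs `i < j` with `i <_T j` in the G-tree. -/
def coinvSet (T : Finset (Finset (Fin n))) : Set (Fin n × Fin n) :=
  {p | p.1 < p.2 ∧ treeLE T p.1 p.2}

/-- Incomparable pairs `i < j` of the G-tree. -/
def incSet (T : Finset (Finset (Fin n))) : Set (Fin n × Fin n) :=
  {p | p.1 < p.2 ∧ ¬ treeLE T p.1 p.2 ∧ ¬ treeLE T p.2 p.1}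

/-- The cut of the tube `J↓(x)`, where `m` is the root of the G-tree of `J`. -/
def cutTube (J : Finset (Finset (Fin n))) (m x : Fin n) : Finset (Fin n) :=
  if x = m then tubingDown J x
  else if x < m then (tubingDown J x).filter (fun y => y < m)
  else (tubingDown J x).filter (fun y => m < y)

/-- The Cut map on maximal tubings of the cycle. -/
def CutTubing (J : Finset (Finset (Fin n))) (m : Fin n) : Finset (Finset (Fin n)) :=
  Finset.image (cutTube J m) Finset.univ

/-- Inversions of a word: pairs `i < j` such that `j` appears before `i`. -/
def listInvSet (w : List (Fin n)) : Set (Fin n × Fin n) :=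
  {p | p.1 < p.2 ∧ p.1 ∈ w ∧ p.2 ∈ w ∧ w.idxOf p.2 < w.idxOf p.1}

end TubingDefs


namespace MTubAux

variable {n : ℕ} {G : SimpleGraph (Fin n)}

def F (X : Finset (Fin n)) : Finset (Fin n) := X.image Fin.rev

lemma mem_F {X : Finset (Fin n)} {a : Fin n} : a ∈ F X ↔ a.rev ∈ X := by
  constructor
  · intro h
    obtain ⟨b, hb, rfl⟩ := Finset.mem_image.1 h
    simpa [Fin.rev_rev] using hb
  · intro h
    exact Finset.mem_image.2 ⟨a.rev, h, Fin.rev_rev a⟩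

lemma F_F (X : Finset (Fin n)) : F (F X) = X := by
  ext a; simp [mem_F, Fin.rev_rev]

lemma F_inj : Function.Injective (F (n := n)) :=
  Function.Involutive.injective F_F

def induceIso (hG : ∀ a b : Fin n, G.Adj a.rev b.rev ↔ G.Adj a b) (X : Finset (Fin n)) :
    G.induce (X : Set (Fin n)) ≃g G.induce ((F X : Finset (Fin n)) : Set (Fin n)) where
  toFun := fun a => ⟨a.1.rev, by
    simp only [Finset.coe_sort_coe, Finset.mem_coe, mem_F, Fin.rev_rev]
    exact a.2⟩
  invFun := fun a => ⟨a.1.rev, by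
    have := a.2
    simp only [Finset.coe_sort_coe, Finset.mem_coe, mem_F] at this ⊢
    exact this⟩
  left_inv := fun a => by ext; simp [Fin.rev_rev]
  right_inv := fun a => by ext; simp [Fin.rev_rev]
  map_rel_iff' := by
    intro a b
    exact hG a.1 b.1

lemma isTube_F (hG : ∀ a b : Fin n, G.Adj a.rev b.rev ↔ G.Adj a b) (X : Finset (Fin n)) :
    IsTube G (F X) ↔ IsTube G X := by
  unfold IsTube
  constructor
  · rintro ⟨h1, h2⟩
    refine ⟨?_, ((induceIso hG X).connected_iff).2 h2⟩
    obtain ⟨a, ha⟩ := h1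
    exact ⟨a.rev, mem_F.1 ha⟩
  · rintro ⟨h1, h2⟩
    exact ⟨h1.image _, ((induceIso hG X).connected_iff).1 h2⟩

end MTubAux


namespace MTubAux

variable {n : ℕ} {G : SimpleGraph (Fin n)}

lemma F_union (X Y : Finset (Fin n)) : F (X ∪ Y) = F X ∪ F Y := by
  ext a; simp [mem_F]

lemma F_subset {X Y : Finset (Fin n)} : F X ⊆ F Y ↔ X ⊆ Y := by
  constructor
  · intro h a ha
    have h1 : a.rev ∈ F X := mem_F.2 (by rwa [Fin.rev_rev])
    have h2 := h h1
    rw [mem_F, Fin.rev_rev] at h2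
    exact h2
  · intro h a ha
    exact mem_F.2 (h (mem_F.1 ha))

lemma compat_F (hG : ∀ a b : Fin n, G.Adj a.rev b.rev ↔ G.Adj a b) {X Y : Finset (Fin n)} :
    TubeCompatible G (F X) (F Y) ↔ TubeCompatible G X Y := by
  unfold TubeCompatible
  rw [F_subset, F_subset, ← F_union, isTube_F hG]

def Φ (T : Finset (Finset (Fin n))) : Finset (Finset (Fin n)) := T.image F

lemma mem_Φ {T : Finset (Finset (Fin n))} {X : Finset (Fin n)} : X ∈ Φ T ↔ F X ∈ T := by
  constructor
  · intro h
    obtain ⟨Y, hY, rfl⟩ := Finset.mem_image.1 h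
    rwa [F_F]
  · intro h
    exact Finset.mem_image.2 ⟨F X, h, F_F X⟩

lemma Φ_Φ (T : Finset (Finset (Fin n))) : Φ (Φ T) = T := by
  ext X; simp [mem_Φ, F_F]

lemma isTubing_Φ (hG : ∀ a b : Fin n, G.Adj a.rev b.rev ↔ G.Adj a b)
    {T : Finset (Finset (Fin n))} (h : IsTubing G T) : IsTubing G (Φ T) := by
  obtain ⟨h1, h2⟩ := h
  constructor
  · intro X hX
    rw [mem_Φ] at hX
    have := h1 _ hX
    rwa [← F_F X, isTube_F hG]
  · intro X hX Y hY
    rw [mem_Φ] at hX hY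
    exact (compat_F hG).1 (h2 _ hX _ hY)

lemma isMaxTubing_Φ (hG : ∀ a b : Fin n, G.Adj a.rev b.rev ↔ G.Adj a b)
    {T : Finset (Finset (Fin n))} (h : IsMaxTubing G T) : IsMaxTubing G (Φ T) := by
  obtain ⟨h1, h2⟩ := h
  refine ⟨isTubing_Φ hG h1, ?_⟩
  intro T' hT' hsub
  have hsub' : T ⊆ Φ T' := by
    rw [← Φ_Φ T]
    exact Finset.image_subset_image hsub
  have := h2 (Φ T') (isTubing_Φ hG hT') hsub'
  rw [← Φ_Φ T', this]

lemma tubingDown_Φ (T : Finset (Finset (Fin n))) (x : Fin n) :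
    tubingDown (Φ T) x = F (tubingDown T x.rev) := by
  ext y
  simp only [tubingDown, Finset.mem_filter, Finset.mem_univ, true_and, mem_F]
  constructor
  · intro h X hX hx
    have := h (F X) (mem_Φ.2 (by rwa [F_F])) (mem_F.2 hx)
    exact mem_F.1 this
  · intro h X hX hx
    rw [mem_Φ] at hX
    have := h (F X) hX (mem_F.2 (by rwa [Fin.rev_rev]))
    rw [mem_F, Fin.rev_rev] at this
    exact this

lemma flipCover_Φ (hG : ∀ a b : Fin n, G.Adj a.rev b.rev ↔ G.Adj a b)
    {T J : Finset (Finset (Fin n))} (h : FlipCover G T J) : FlipCover G (Φ J) (Φ T) := by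
  obtain ⟨hT, hJ, X, Y, hXT, hYJ, hne, her, x, y, hx, hy, hxy⟩ := h
  refine ⟨isMaxTubing_Φ hG hJ, isMaxTubing_Φ hG hT, F Y, F X,
    Finset.mem_image_of_mem _ hYJ, Finset.mem_image_of_mem _ hXT,
    fun hc => hne (F_inj hc).symm, ?_, y.rev, x.rev, ?_, ?_, ?_⟩
  · show (J.image F).erase (F Y) = (T.image F).erase (F X)
    rw [← Finset.image_erase F_inj, ← Finset.image_erase F_inj, her]
  · rw [tubingDown_Φ, Fin.rev_rev, hy]
  · rw [tubingDown_Φ, Fin.rev_rev, hx]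
  · exact Fin.rev_lt_rev.2 hxy

lemma mtubLE_Φ (hG : ∀ a b : Fin n, G.Adj a.rev b.rev ↔ G.Adj a b)
    {T J : Finset (Finset (Fin n))} (h : MTubLE G T J) : MTubLE G (Φ J) (Φ T) := by
  induction h with
  | refl => exact Relation.ReflTransGen.refl
  | tail _ hstep ih => exact Relation.ReflTransGen.head (flipCover_Φ hG hstep) ih

end MTubAux

/-- The path graph `1 - 2 - ⋯ - n`. -/
def pathGraph (n : ℕ) : SimpleGraph (Fin n) :=
  SimpleGraph.fromRel (fun a b => (a : ℕ) + 1 = (b : ℕ))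

/-- The cycle graph `1 - 2 - ⋯ - n - 1`. -/
def cycleGraph (n : ℕ) : SimpleGraph (Fin n) :=
  SimpleGraph.fromRel (fun a b => (a : ℕ) + 1 = (b : ℕ) ∨ ((a : ℕ) = 0 ∧ (b : ℕ) = n - 1))

/-- The poset of maximal tubings of `G` is self-dual (anti-isomorphic to itself). -/
def MTubSelfDual {n : ℕ} (G : SimpleGraph (Fin n)) : Prop :=
  ∃ φ : {T : Finset (Finset (Fin n)) // IsMaxTubing G T} ≃
        {T : Finset (Finset (Fin n)) // IsMaxTubing G T},
    ∀ T T', MTubLE G T.1 T'.1 ↔ MTubLE G (φ T').1 (φ T).1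

namespace MTubAux
variable {n : ℕ} {G : SimpleGraph (Fin n)}

lemma selfDual_of_rev (hG : ∀ a b : Fin n, G.Adj a.rev b.rev ↔ G.Adj a b) :
    MTubSelfDual G := by
  let f : {T : Finset (Finset (Fin n)) // IsMaxTubing G T} →
      {T : Finset (Finset (Fin n)) // IsMaxTubing G T} :=
    fun T => ⟨Φ T.1, isMaxTubing_Φ hG T.2⟩
  have hf : Function.Involutive f := fun T => Subtype.ext (Φ_Φ T.1)
  refine ⟨hf.toPerm f, fun T T' => ⟨fun h => mtubLE_Φ hG h, fun h => ?_⟩⟩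
  have := mtubLE_Φ hG h
  simpa [f, Φ_Φ] using this


end MTubAux

/-- If the order-reversing permutation `w₀ : i ↦ n+1-i` induces an automorphism of the
labeled graph `G`, then `MTub(G)` is self-dual; in particular `MTub(Pₙ)` and `MTub(Cₙ)`
are self-dual. -/
theorem mtub_selfDual (n : ℕ) (G : SimpleGraph (Fin n))
    (hG : ∀ a b : Fin n, G.Adj a.rev b.rev ↔ G.Adj a b) :
    MTubSelfDual G ∧ MTubSelfDual (pathGraph n) ∧ MTubSelfDual (cycleGraph n) := by
  refine ⟨MTubAux.selfDual_of_rev hG, MTubAux.selfDual_of_rev ?_, MTubAux.selfDual_of_rev ?_⟩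
  · intro a b
    have ha := a.isLt
    have hb := b.isLt
    simp only [pathGraph, SimpleGraph.fromRel_adj, Fin.val_rev, ne_eq, Fin.rev_inj]
    constructor <;> rintro ⟨h1, h2⟩ <;> exact ⟨h1, by omega⟩
  · intro a b
    have ha := a.isLt
    have hb := b.isLt
    simp only [cycleGraph, SimpleGraph.fromRel_adj, Fin.val_rev, ne_eq, Fin.rev_inj]
    constructor <;> rintro ⟨h1, h2⟩ <;> exact ⟨h1, by omega⟩
end

section
/- Let T be a maximal tubing of a connected graph G on [n]. Define x ≤_T y iff x belongs to the smallest tube of T containing y. Then in the resulting partial order on [n], every element has at most one cover, so the Hasse diagram of ≤_T is a rooted tree (the G-tree of T). -/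
open Finset

lemma treeLE_mem {n : ℕ} {T : Finset (Finset (Fin n))} {x y : Fin n}
    (h : treeLE T x y) {X : Finset (Fin n)} (hX : X ∈ T) (hy : y ∈ X) : x ∈ X := by
  simp only [treeLE, tubingDown, Finset.mem_filter, Finset.mem_univ, true_and] at h
  exact h X hX hy

/-- In the G-tree order of a maximal tubing of a connected graph, every element has at
most one cover; hence the Hasse diagram is a rooted tree. -/
theorem gtree_unique_cover (n : ℕ) (G : SimpleGraph (Fin n)) (hG : G.Connected)
    (T : Finset (Finset (Fin n))) (hT : IsMaxTubing G T) :
    ∀ x y z : Fin n, TreeCovBy T x y → TreeCovBy T x z → y = z := by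
  intro x y z hy hz
  have key : treeLE T y z ∨ treeLE T z y := by
    by_contra h
    push_neg at h
    obtain ⟨h1, h2⟩ := h
    simp only [treeLE, tubingDown, Finset.mem_filter, Finset.mem_univ, true_and,
      not_forall] at h1 h2
    obtain ⟨X, hXT, hzX, hyX⟩ := h1
    obtain ⟨Y, hYT, hyY, hzY⟩ := h2
    have hxX : x ∈ X := treeLE_mem hz.1 hXT hzX
    have hxY : x ∈ Y := treeLE_mem hy.1 hYT hyY
    rcases hT.1.2 X hXT Y hYT with hc | hc | hc
    · exact hzY (hc hzX)
    · exact hyX (hc hyY)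
    · apply hc
      constructor
      · exact ⟨x, Finset.mem_union_left _ hxX⟩
      · have : ((X ∪ Y : Finset (Fin n)) : Set (Fin n)) = (X : Set (Fin n)) ∪ (Y : Set (Fin n)) := by
          simp
        rw [this]
        exact SimpleGraph.induce_union_connected (hT.1.1 X hXT).2.preconnected (hT.1.1 Y hYT).2.preconnected
          ⟨x, hxX, hxY⟩
  rcases key with h | h
  · rcases hz.2.2 y hy.1 h with h' | h'
    · exact absurd h'.symm hy.2.1
    · exact h'
  · rcases hy.2.2 z hz.1 h with h' | h'
    · exact absurd h'.symm hz.2.1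
    · exact (h').symm
end

section
/- For maximal tubings X and Y of the path graph P_n, the following are equivalent: (1) X ≤ Y in MTub(P_n); (2) inv(X) ⊆ inv(Y); (3) inv(X) ⊆ inv(Y) ∪ inc(Y); (4) inv(X) ∪ inc(X) ⊆ inv(Y) ∪ inc(Y); (5) coinv(X) ⊇ coinv(Y). -/
open Finset

namespace MTaux

open Finset

variable {n : ℕ}

/-- Interval predicate on finsets of `Fin n`. -/
def Iv (X : Finset (Fin n)) : Prop :=
  ∀ ⦃a b c : Fin n⦄, a ∈ X → b ∈ X → a ≤ c → c ≤ b → c ∈ X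

lemma pathAdj {a b : Fin n} (h : (a:ℕ) + 1 = (b:ℕ)) : (pathGraph n).Adj a b := by
  rw [pathGraph, SimpleGraph.fromRel_adj]
  exact ⟨by intro hab; subst hab; omega, Or.inl h⟩

lemma pathAdj_iff {a b : Fin n} :
    (pathGraph n).Adj a b ↔ a ≠ b ∧ ((a:ℕ) + 1 = b ∨ (b:ℕ) + 1 = a) := by
  rw [pathGraph, SimpleGraph.fromRel_adj]

/-- interval implies connected -/
lemma iv_connected {X : Finset (Fin n)} (hne : X.Nonempty) (hiv : Iv X) :
    ((pathGraph n).induce (X : Set (Fin n))).Connected := by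
  have hreach : ∀ k : ℕ, ∀ a b : Fin n, ∀ (ha : a ∈ X) (hb : b ∈ X), a ≤ b → (b:ℕ) - a = k →
      ((pathGraph n).induce (X : Set (Fin n))).Reachable ⟨a, by simpa using ha⟩ ⟨b, by simpa using hb⟩ := by
    intro k
    induction k with
    | zero =>
      intro a b ha hb hab h0
      have : a = b := Fin.le_antisymm hab (Fin.le_def.mpr (by omega))
      subst this; exact SimpleGraph.Reachable.refl _
    | succ k ih =>
      intro a b ha hb hab hk
      have hlt : (a:ℕ) < (b:ℕ) := by omega
      have ha1 : (a:ℕ) + 1 < n := lt_of_le_of_lt (by omega) b.isLt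
      set a' : Fin n := ⟨(a:ℕ)+1, ha1⟩ with ha'
      have ha'X : a' ∈ X := hiv ha hb (by simp [ha', Fin.le_def]) (by simp [ha', Fin.le_def]; omega)
      have hadj : ((pathGraph n).induce (X : Set (Fin n))).Adj ⟨a, by simpa using ha⟩ ⟨a', by simpa using ha'X⟩ :=
        pathAdj rfl
      exact hadj.reachable.trans (ih a' b ha'X hb (by simp [ha', Fin.le_def]; omega) (by simp [ha']; omega))
  rw [SimpleGraph.connected_iff]
  refine ⟨?_, ?_⟩
  · rintro ⟨u, hu⟩ ⟨v, hv⟩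
    rcases le_total u v with h | h
    · exact hreach _ u v (by simpa using hu) (by simpa using hv) h rfl
    · exact (hreach _ v u (by simpa using hv) (by simpa using hu) h rfl).symm
  · obtain ⟨x, hx⟩ := hne
    exact ⟨⟨x, by simpa using hx⟩⟩

/-- connected implies interval -/
lemma connected_iv {X : Finset (Fin n)}
    (hc : ((pathGraph n).induce (X : Set (Fin n))).Connected) : Iv X := by
  intro a b c ha hb hac hcb
  by_contra hcX
  have hr := hc.preconnected ⟨a, by simpa using ha⟩ ⟨b, by simpa using hb⟩
  rcases hr with ⟨w⟩
  have key : ∀ (u v : (X : Set (Fin n))), ((pathGraph n).induce (X : Set (Fin n))).Walk u v →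
      ((u:Fin n) < c ↔ (v:Fin n) < c) := by
    intro u v w
    induction w with
    | nil => rfl
    | @cons p q r hadj _ ih =>
      have hpq : (pathGraph n).Adj (p : Fin n) (q : Fin n) := hadj
      rw [pathAdj_iff] at hpq
      have hq : (q : Fin n) ∈ X := by simpa using q.2
      have hp : (p : Fin n) ∈ X := by simpa using p.2
      have hqc : (q : Fin n) ≠ c := fun h => hcX (h ▸ hq)
      have hpc : (p : Fin n) ≠ c := fun h => hcX (h ▸ hp)
      rw [← ih]
      have hqc' : (q : Fin n) < c ∨ c < (q : Fin n) := Fin.lt_or_lt_of_ne hqc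
      have hpc' : (p : Fin n) < c ∨ c < (p : Fin n) := Fin.lt_or_lt_of_ne hpc
      rcases hpq.2 with h1 | h1 <;>
        · constructor <;> intro hh <;>
          · rcases hqc' with h | h <;> rcases hpc' with h' | h' <;>
              rw [Fin.lt_def] at * <;> omega
  have h2 := key _ _ w
  have hac' : a < c := lt_of_le_of_ne hac (fun h => hcX (h ▸ ha))
  have hcb' : c < b := lt_of_le_of_ne hcb (fun h => hcX (h ▸ hb))
  rw [show ((⟨a, by simpa using ha⟩ : (X : Set (Fin n))) : Fin n) = a from rfl,
    show ((⟨b, by simpa using hb⟩ : (X : Set (Fin n))) : Fin n) = b from rfl] at h2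
  rw [Fin.lt_def] at *
  omega

lemma tube_iff {X : Finset (Fin n)} :
    IsTube (pathGraph n) X ↔ X.Nonempty ∧ Iv X := by
  constructor
  · rintro ⟨hne, hc⟩; exact ⟨hne, connected_iv hc⟩
  · rintro ⟨hne, hiv⟩; exact ⟨hne, iv_connected hne hiv⟩

end MTaux
namespace MTaux

open Finset

variable {n : ℕ} {T : Finset (Finset (Fin n))}

lemma mem_iv (hT : IsTubing (pathGraph n) T) {A : Finset (Fin n)} (hA : A ∈ T) : Iv A :=
  (tube_iff.1 (hT.1 A hA)).2

lemma mem_ne (hT : IsTubing (pathGraph n) T) {A : Finset (Fin n)} (hA : A ∈ T) : A.Nonempty :=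
  (tube_iff.1 (hT.1 A hA)).1

lemma not_tube_sep {A B : Finset (Fin n)} {g : Fin n}
    (h1 : ∀ a ∈ A, a < g) (h2 : ∀ b ∈ B, g < b) (hA : A.Nonempty) (hB : B.Nonempty) :
    ¬ IsTube (pathGraph n) (A ∪ B) := by
  rw [tube_iff]
  rintro ⟨-, hiv⟩
  obtain ⟨a, ha⟩ := hA
  obtain ⟨b, hb⟩ := hB
  have := hiv (mem_union_left _ ha) (mem_union_right _ hb)
    (le_of_lt (h1 a ha)) (le_of_lt (h2 b hb))
  rcases mem_union.1 this with h | h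
  · exact absurd (h1 g h) (lt_irrefl g)
  · exact absurd (h2 g h) (lt_irrefl g)

lemma tubing_trichotomy (hT : IsTubing (pathGraph n) T) {A B : Finset (Fin n)}
    (hA : A ∈ T) (hB : B ∈ T) :
    A ⊆ B ∨ B ⊆ A ∨ ∃ g, g ∉ A ∧ g ∉ B ∧
      ((∀ a ∈ A, a < g) ∧ (∀ b ∈ B, g < b) ∨ (∀ b ∈ B, b < g) ∧ (∀ a ∈ A, g < a)) := by
  rcases hT.2 A hA B hB with h | h | h
  · exact Or.inl h
  · exact Or.inr (Or.inl h)
  · right; right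
    have hABiv : ¬ Iv (A ∪ B) := by
      intro hiv
      exact h (tube_iff.2 ⟨(mem_ne hT hA).mono subset_union_left, hiv⟩)
    rw [Iv] at hABiv
    push_neg at hABiv
    obtain ⟨a, b, c, ha, hb, hac, hcb, hc⟩ := hABiv
    have hcA : c ∉ A := fun h => hc (mem_union_left _ h)
    have hcB : c ∉ B := fun h => hc (mem_union_right _ h)
    have hAside : (∀ x ∈ A, x < c) ∨ (∀ x ∈ A, c < x) := by
      by_contra hcon
      push_neg at hcon
      obtain ⟨⟨u, hu, hcu⟩, v, hv, hvc⟩ := hcon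
      exact hcA ((mem_iv hT hA) hv hu hvc hcu)
    have hBside : (∀ x ∈ B, x < c) ∨ (∀ x ∈ B, c < x) := by
      by_contra hcon
      push_neg at hcon
      obtain ⟨⟨u, hu, hcu⟩, v, hv, hvc⟩ := hcon
      exact hcB ((mem_iv hT hB) hv hu hvc hcu)
    have hac' : a < c := lt_of_le_of_ne hac (fun h => hc (h ▸ ha))
    have hcb' : c < b := lt_of_le_of_ne hcb (fun h => hc (h ▸ hb))
    rcases hAside with hA1 | hA1 <;> rcases hBside with hB1 | hB1
    · rcases mem_union.1 hb with h' | h'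
      · exact absurd (hA1 b h') (asymm hcb')
      · exact absurd (hB1 b h') (asymm hcb')
    · exact ⟨c, hcA, hcB, Or.inl ⟨hA1, hB1⟩⟩
    · exact ⟨c, hcA, hcB, Or.inr ⟨hB1, hA1⟩⟩
    · rcases mem_union.1 ha with h' | h'
      · exact absurd (hA1 a h') (asymm hac')
      · exact absurd (hB1 a h') (asymm hac')

lemma nested_of_mem_mem (hT : IsTubing (pathGraph n) T) {A B : Finset (Fin n)}
    (hA : A ∈ T) (hB : B ∈ T) {x : Fin n} (hx : x ∈ A) (hx' : x ∈ B) : A ⊆ B ∨ B ⊆ A := by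
  rcases tubing_trichotomy hT hA hB with h | h | ⟨g, -, -, ⟨h1, h2⟩ | ⟨h1, h2⟩⟩
  · exact Or.inl h
  · exact Or.inr h
  · exact absurd (lt_trans (h1 x hx) (h2 x hx')) (lt_irrefl x)
  · exact absurd (lt_trans (h1 x hx') (h2 x hx)) (lt_irrefl x)

lemma exists_min_tube (hT : IsTubing (pathGraph n) T) {x : Fin n} {A0 : Finset (Fin n)}
    (hA0 : A0 ∈ T) (hx0 : x ∈ A0) : ∃ D ∈ T, x ∈ D ∧ ∀ A ∈ T, x ∈ A → D ⊆ A := by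
  have hne : (T.filter (fun A => x ∈ A)).Nonempty := ⟨A0, mem_filter.2 ⟨hA0, hx0⟩⟩
  obtain ⟨D, hD, hmin⟩ := Finset.exists_min_image _ (fun A => A.card) hne
  rw [mem_filter] at hD
  refine ⟨D, hD.1, hD.2, fun A hA hxA => ?_⟩
  rcases nested_of_mem_mem hT hD.1 hA hD.2 hxA with h | h
  · exact h
  · have := hmin A (mem_filter.2 ⟨hA, hxA⟩)
    rw [Finset.eq_of_subset_of_card_le h this]

lemma down_eq (hT : IsTubing (pathGraph n) T) {x : Fin n} {D : Finset (Fin n)}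
    (hD : D ∈ T) (hx : x ∈ D) (hmin : ∀ A ∈ T, x ∈ A → D ⊆ A) : tubingDown T x = D := by
  ext y
  simp only [tubingDown, mem_filter, mem_univ, true_and]
  exact ⟨fun h => h D hD hx, fun hy A hA hxA => (hmin A hA hxA) hy⟩

lemma down_spec (hT : IsTubing (pathGraph n) T) {x : Fin n} {A0 : Finset (Fin n)}
    (hA0 : A0 ∈ T) (hx0 : x ∈ A0) :
    tubingDown T x ∈ T ∧ x ∈ tubingDown T x ∧ ∀ A ∈ T, x ∈ A → tubingDown T x ⊆ A := by
  obtain ⟨D, hD, hx, hmin⟩ := exists_min_tube hT hA0 hx0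
  rw [down_eq hT hD hx hmin]
  exact ⟨hD, hx, hmin⟩

lemma compat_symm {G : SimpleGraph (Fin n)} {A B : Finset (Fin n)} :
    TubeCompatible G A B → TubeCompatible G B A := by
  rintro (h | h | h)
  · exact Or.inr (Or.inl h)
  · exact Or.inl h
  · exact Or.inr (Or.inr (by rwa [union_comm]))

lemma insert_max {G : SimpleGraph (Fin n)} (hT : IsMaxTubing G T) {C : Finset (Fin n)}
    (hC : IsTube G C) (hcompat : ∀ A ∈ T, TubeCompatible G C A) : C ∈ T := by
  have htub : IsTubing G (insert C T) := by
    constructor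
    · intro X hX
      rcases mem_insert.1 hX with rfl | hX
      · exact hC
      · exact hT.1.1 X hX
    · intro X hX Y hY
      rcases mem_insert.1 hX with hX1 | hX1 <;> rcases mem_insert.1 hY with hY1 | hY1
      · subst hX1; subst hY1; exact Or.inl (subset_refl _)
      · subst hX1; exact hcompat Y hY1
      · subst hY1; exact compat_symm (hcompat X hX1)
      · exact hT.1.2 X hX1 Y hY1
  have := hT.2 _ htub (subset_insert _ _)
  exact this ▸ mem_insert_self C T

lemma univ_mem (hT : IsMaxTubing (pathGraph n) T) (x0 : Fin n) : (univ : Finset (Fin n)) ∈ T := by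
  refine insert_max hT (tube_iff.2 ⟨⟨x0, mem_univ x0⟩, fun a b c _ _ _ _ => mem_univ c⟩)
    (fun A hA => Or.inr (Or.inl (subset_univ A)))

end MTaux
namespace MTaux

open Finset

variable {n : ℕ} {T : Finset (Finset (Fin n))}

lemma iv_side {A : Finset (Fin n)} {t : Fin n} (hiv : Iv A) (ht : t ∉ A) :
    (∀ x ∈ A, x < t) ∨ (∀ x ∈ A, t < x) := by
  by_contra hcon
  push_neg at hcon
  obtain ⟨⟨u, hu, hut⟩, v, hv, hvt⟩ := hcon
  exact ht (hiv hv hu hvt hut)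

lemma compat_sep {A B : Finset (Fin n)} {g : Fin n}
    (h1 : ∀ a ∈ A, a < g) (h2 : ∀ b ∈ B, g < b) (hA : A.Nonempty) (hB : B.Nonempty) :
    TubeCompatible (pathGraph n) A B :=
  Or.inr (Or.inr (not_tube_sep h1 h2 hA hB))

lemma top_exists (hT : IsTubing (pathGraph n) T) {B : Finset (Fin n)} (hB : B ∈ T) :
    ∃ t ∈ B, ∀ A ∈ T, t ∈ A → A ⊆ B → A = B := by
  by_contra hcon
  push_neg at hcon
  have hM : ∀ s ∈ B, ∃ M, (M ∈ T ∧ s ∈ M ∧ M ⊆ B ∧ M ≠ B) ∧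
      ∀ A, (A ∈ T ∧ s ∈ A ∧ A ⊆ B ∧ A ≠ B) → M ⊆ A → A = M := by
    intro s hs
    obtain ⟨A, hA, hsA, hAB, hne⟩ := hcon s hs
    have hfil : (T.filter (fun A => s ∈ A ∧ A ⊆ B ∧ A ≠ B)).Nonempty :=
      ⟨A, mem_filter.2 ⟨hA, hsA, hAB, hne⟩⟩
    obtain ⟨M, hMmem, hMmax⟩ := Finset.exists_max_image _ (fun A => A.card) hfil
    rw [mem_filter] at hMmem
    refine ⟨M, ⟨hMmem.1, hMmem.2⟩, fun A hA' hMA => ?_⟩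
    exact (Finset.eq_of_subset_of_card_le hMA (hMmax A (mem_filter.2 ⟨hA'.1, hA'.2⟩))).symm
  have hBne : B.Nonempty := mem_ne hT hB
  set a := B.min' hBne with ha
  obtain ⟨M1, ⟨hM1T, haM1, hM1B, hM1ne⟩, hM1max⟩ := hM a (B.min'_mem hBne)
  have hdiff : (B \ M1).Nonempty :=
    Finset.sdiff_nonempty.2 (fun h => hM1ne (Finset.Subset.antisymm hM1B h))
  set s := (B \ M1).min' hdiff with hsdef
  have hsmem := (B \ M1).min'_mem hdiff
  rw [mem_sdiff] at hsmem
  obtain ⟨M2, ⟨hM2T, hsM2, hM2B, hM2ne⟩, hM2max⟩ := hM s hsmem.1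
  rcases tubing_trichotomy hT hM1T hM2T with h | h | ⟨g, hg1, hg2, ⟨h1, h2⟩ | ⟨h1, h2⟩⟩
  · have heq : M2 = M1 := hM1max M2 ⟨hM2T, h haM1, hM2B, hM2ne⟩ h
    rw [heq] at hsM2
    exact hsmem.2 hsM2
  · exact hsmem.2 (h hsM2)
  · have hgB : g ∈ B := (mem_iv hT hB) (hM1B haM1) (hM2B hsM2)
      (le_of_lt (h1 a haM1)) (le_of_lt (h2 s hsM2))
    have hsg : s ≤ g := (B \ M1).min'_le g (mem_sdiff.2 ⟨hgB, hg1⟩)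
    exact absurd (h2 s hsM2) (not_lt.2 hsg)
  · have h3 : g < a := h2 a haM1
    have h4 : s < g := h1 s hsM2
    have h5 : a ≤ s := B.min'_le s hsmem.1
    exact lt_asymm h3 (lt_of_le_of_lt h5 h4)

/-- adding the left part below the top of a tube -/
lemma filter_lt_mem (hT : IsMaxTubing (pathGraph n) T) {B : Finset (Fin n)} {t : Fin n}
    (hB : B ∈ T) (htB : t ∈ B) (htop : ∀ A ∈ T, t ∈ A → A ⊆ B → A = B)
    (hne : (B.filter (fun x => x < t)).Nonempty) : B.filter (fun x => x < t) ∈ T := by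
  set C := B.filter (fun x => x < t) with hC
  have hCB : C ⊆ B := filter_subset _ _
  have hCiv : Iv C := by
    intro u v w hu hv huw hwv
    rw [hC, mem_filter] at *
    exact ⟨(mem_iv hT.1 hB) hu.1 hv.1 huw hwv, lt_of_le_of_lt hwv hv.2⟩
  refine insert_max hT (tube_iff.2 ⟨hne, hCiv⟩) (fun A hA => ?_)
  rcases tubing_trichotomy hT.1 hA hB with h | h | ⟨g, hg1, hg2, ⟨h1, h2⟩ | ⟨h1, h2⟩⟩
  · -- A ⊆ B
    by_cases htA : t ∈ A
    · exact Or.inl (htop A hA htA h ▸ hCB)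
    · rcases iv_side (mem_iv hT.1 hA) htA with hside | hside
      · exact Or.inr (Or.inl (fun x hx => mem_filter.2 ⟨h hx, hside x hx⟩))
      · exact compat_sep (fun x hx => (mem_filter.1 hx).2) hside hne (mem_ne hT.1 hA)
  · exact Or.inl (hCB.trans h)
  · -- A left of g, B right of g
    exact compat_symm (compat_sep h1 (fun x hx => h2 x (hCB hx)) (mem_ne hT.1 hA) hne)
  · -- B left of g, A right of g
    exact compat_sep (fun x hx => h1 x (hCB hx)) h2 hne (mem_ne hT.1 hA)

/-- adding the right part above the top of a tube -/
lemma filter_gt_mem (hT : IsMaxTubing (pathGraph n) T) {B : Finset (Fin n)} {t : Fin n}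
    (hB : B ∈ T) (htB : t ∈ B) (htop : ∀ A ∈ T, t ∈ A → A ⊆ B → A = B)
    (hne : (B.filter (fun x => t < x)).Nonempty) : B.filter (fun x => t < x) ∈ T := by
  set C := B.filter (fun x => t < x) with hC
  have hCB : C ⊆ B := filter_subset _ _
  have hCiv : Iv C := by
    intro u v w hu hv huw hwv
    rw [hC, mem_filter] at *
    exact ⟨(mem_iv hT.1 hB) hu.1 hv.1 huw hwv, lt_of_lt_of_le hu.2 huw⟩
  refine insert_max hT (tube_iff.2 ⟨hne, hCiv⟩) (fun A hA => ?_)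
  rcases tubing_trichotomy hT.1 hA hB with h | h | ⟨g, hg1, hg2, ⟨h1, h2⟩ | ⟨h1, h2⟩⟩
  · by_cases htA : t ∈ A
    · exact Or.inl (htop A hA htA h ▸ hCB)
    · rcases iv_side (mem_iv hT.1 hA) htA with hside | hside
      · exact compat_symm (compat_sep hside (fun x hx => (mem_filter.1 hx).2) (mem_ne hT.1 hA) hne)
      · exact Or.inr (Or.inl (fun x hx => mem_filter.2 ⟨h hx, hside x hx⟩))
  · exact Or.inl (hCB.trans h)
  · exact compat_symm (compat_sep h1 (fun x hx => h2 x (hCB hx)) (mem_ne hT.1 hA) hne)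
  · exact compat_sep (fun x hx => h1 x (hCB hx)) h2 hne (mem_ne hT.1 hA)

lemma top_unique (hT : IsMaxTubing (pathGraph n) T) {B : Finset (Fin n)} {t t' : Fin n}
    (hB : B ∈ T) (htB : t ∈ B) (htop : ∀ A ∈ T, t ∈ A → A ⊆ B → A = B)
    (htB' : t' ∈ B) (htop' : ∀ A ∈ T, t' ∈ A → A ⊆ B → A = B) : t = t' := by
  rcases lt_trichotomy t t' with h | h | h
  · exfalso
    have hne : (B.filter (fun x => x < t')).Nonempty := ⟨t, mem_filter.2 ⟨htB, h⟩⟩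
    have hCT := filter_lt_mem hT hB htB' htop' hne
    have := htop _ hCT (mem_filter.2 ⟨htB, h⟩) (filter_subset _ _)
    rw [← this] at htB'
    exact absurd (mem_filter.1 htB').2 (lt_irrefl t')
  · exact h
  · exfalso
    have hne : (B.filter (fun x => t' < x)).Nonempty := ⟨t, mem_filter.2 ⟨htB, h⟩⟩
    have hCT := filter_gt_mem hT hB htB' htop' hne
    have := htop _ hCT (mem_filter.2 ⟨htB, h⟩) (filter_subset _ _)
    rw [← this] at htB'
    exact absurd (mem_filter.1 htB').2 (lt_irrefl t')

end MTaux
namespace MTaux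

open Finset

variable {n : ℕ} {T : Finset (Finset (Fin n))}

lemma mem_down_iff {T : Finset (Finset (Fin n))} {y x : Fin n} :
    y ∈ tubingDown T x ↔ ∀ A ∈ T, x ∈ A → y ∈ A := by
  simp [tubingDown]

lemma treeLE_refl (T : Finset (Finset (Fin n))) (x : Fin n) : treeLE T x x :=
  mem_down_iff.2 (fun _ _ h => h)

lemma treeLE_trans {T : Finset (Finset (Fin n))} {x y z : Fin n}
    (h1 : treeLE T x y) (h2 : treeLE T y z) : treeLE T x z := by
  rw [treeLE, mem_down_iff] at *
  exact fun A hA hzA => h1 A hA (h2 A hA hzA)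

section Max

variable (hmax : IsMaxTubing (pathGraph n) T)
include hmax

lemma down_mem (x : Fin n) : tubingDown T x ∈ T :=
  (down_spec hmax.1 (univ_mem hmax x) (mem_univ x)).1

omit hmax in
lemma down_self (x : Fin n) : x ∈ tubingDown T x := treeLE_refl T x

lemma down_min {x : Fin n} {A : Finset (Fin n)} (hA : A ∈ T) (hx : x ∈ A) :
    tubingDown T x ⊆ A :=
  (down_spec hmax.1 (univ_mem hmax x) (mem_univ x)).2.2 A hA hx

lemma down_isTop (x : Fin n) :
    ∀ A ∈ T, x ∈ A → A ⊆ tubingDown T x → A = tubingDown T x :=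
  fun A hA hxA hsub => Finset.Subset.antisymm hsub (down_min hmax hA hxA)

lemma down_inj {x y : Fin n} (h : tubingDown T x = tubingDown T y) : x = y := by
  refine top_unique hmax (down_mem hmax x) (down_self (T := T) x) (down_isTop hmax x)
    (h ▸ down_self (T := T) y) ?_
  intro A hA hyA hsub
  rw [h]
  exact down_isTop hmax y A hA hyA (h ▸ hsub)

lemma treeLE_antisymm {x y : Fin n} (h1 : treeLE T x y) (h2 : treeLE T y x) : x = y := by
  refine down_inj hmax (Finset.Subset.antisymm ?_ ?_) <;>
    · intro z hz
      rw [mem_down_iff] at *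
      rw [treeLE, mem_down_iff] at h1 h2
      intro A hA hxA
      first
      | exact hz A hA (h2 A hA hxA)
      | exact hz A hA (h1 A hA hxA)
  -- note: goals are down x ⊆ down y and down y ⊆ down x
  -- the `first` covers both directions

lemma down_iv (x : Fin n) : Iv (tubingDown T x) := mem_iv hmax.1 (down_mem hmax x)

lemma treeLE_between {u v w : Fin n} (huv : treeLE T u v)
    (h1 : min u v ≤ w) (h2 : w ≤ max u v) : treeLE T w v := by
  have hu : u ∈ tubingDown T v := huv
  have hv : v ∈ tubingDown T v := down_self (T := T) v
  rcases le_total u v with h | h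
  · exact (down_iv hmax v) hu hv (by simpa [min_eq_left h] using h1) (by simpa [max_eq_right h] using h2)
  · exact (down_iv hmax v) hv hu (by simpa [min_eq_right h] using h1) (by simpa [max_eq_left h] using h2)

lemma down_surj {B : Finset (Fin n)} (hB : B ∈ T) : ∃ t, tubingDown T t = B := by
  obtain ⟨t, htB, htop⟩ := top_exists hmax.1 hB
  exact ⟨t, htop _ (down_mem hmax t) (down_self (T := T) t) (down_min hmax hB htB)⟩

lemma down_top_eq {B : Finset (Fin n)} {t : Fin n} (hB : B ∈ T) (htB : t ∈ B)
    (htop : ∀ A ∈ T, t ∈ A → A ⊆ B → A = B) : tubingDown T t = B :=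
  htop _ (down_mem hmax t) (down_self (T := T) t) (down_min hmax hB htB)

lemma sandwich {i j : Fin n} (hij : i < j) (h1 : ¬ treeLE T i j) (h2 : ¬ treeLE T j i) :
    ∃ t, i < t ∧ t < j ∧ treeLE T i t ∧ treeLE T j t := by
  have hfil : (T.filter (fun A => i ∈ A ∧ j ∈ A)).Nonempty :=
    ⟨univ, mem_filter.2 ⟨univ_mem hmax i, mem_univ i, mem_univ j⟩⟩
  obtain ⟨B, hBmem, hBmin⟩ := Finset.exists_min_image _ (fun A => A.card) hfil
  rw [mem_filter] at hBmem
  obtain ⟨hBT, hiB, hjB⟩ := hBmem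
  have hBsub : ∀ A ∈ T, i ∈ A → j ∈ A → B ⊆ A := by
    intro A hA hiA hjA
    rcases nested_of_mem_mem hmax.1 hBT hA hiB hiA with h | h
    · exact h
    · rw [Finset.eq_of_subset_of_card_le h (hBmin A (mem_filter.2 ⟨hA, hiA, hjA⟩))]
  obtain ⟨t, htB, htop⟩ := top_exists hmax.1 hBT
  have hdt : tubingDown T t = B := down_top_eq hmax hBT htB htop
  have hit : treeLE T i t := by rw [treeLE, hdt]; exact hiB
  have hjt : treeLE T j t := by rw [treeLE, hdt]; exact hjB
  have hti : t ≠ i := by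
    rintro rfl
    exact h2 (by rw [treeLE, hdt]; exact hjB)
  have htj : t ≠ j := by
    rintro rfl
    exact h1 (by rw [treeLE, hdt]; exact hiB)
  have hnlt : ¬ t < i := by
    intro hlt
    have hne : (B.filter (fun x => t < x)).Nonempty := ⟨i, mem_filter.2 ⟨hiB, hlt⟩⟩
    have hRT := filter_gt_mem hmax hBT htB htop hne
    have := hBsub _ hRT (mem_filter.2 ⟨hiB, hlt⟩) (mem_filter.2 ⟨hjB, lt_trans hlt hij⟩)
    exact absurd (mem_filter.1 (this htB)).2 (lt_irrefl t)
  have hngt : ¬ j < t := by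
    intro hlt
    have hne : (B.filter (fun x => x < t)).Nonempty := ⟨j, mem_filter.2 ⟨hjB, hlt⟩⟩
    have hLT := filter_lt_mem hmax hBT htB htop hne
    have := hBsub _ hLT (mem_filter.2 ⟨hiB, lt_trans hij hlt⟩) (mem_filter.2 ⟨hjB, hlt⟩)
    exact absurd (mem_filter.1 (this htB)).2 (lt_irrefl t)
  exact ⟨t, lt_of_le_of_ne (not_lt.1 hnlt) (Ne.symm hti), lt_of_le_of_ne (not_lt.1 hngt) htj, hit, hjt⟩

end Max

lemma tubing_card_le (hT : IsTubing (pathGraph n) T) : T.card ≤ n := by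
  rcases T.eq_empty_or_nonempty with rfl | ⟨B0, hB0⟩
  · simp
  · obtain ⟨x0, -⟩ := mem_ne hT hB0
    classical
    set f : Finset (Fin n) → Fin n :=
      fun B => if h : B ∈ T then Classical.choose (top_exists hT h) else x0 with hf
    have hmem : ∀ B ∈ T, f B ∈ B := by
      intro B hB
      rw [hf]
      simp only [hB, dif_pos]
      exact (Classical.choose_spec (top_exists hT hB)).1
    have htop : ∀ B (hB : B ∈ T), ∀ A ∈ T, f B ∈ A → A ⊆ B → A = B := by
      intro B hB
      rw [hf]
      simp only [hB, dif_pos]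
      exact (Classical.choose_spec (top_exists hT hB)).2
    have hinj : Set.InjOn f T := by
      intro B hB B' hB' hfeq
      rw [Finset.mem_coe] at hB hB'
      have h1 : f B ∈ B' := hfeq ▸ hmem B' hB'
      have h2 : f B' ∈ B := hfeq ▸ hmem B hB
      rcases nested_of_mem_mem hT hB hB' (hmem B hB) h1 with h | h
      · exact (htop B' hB' B hB (hfeq ▸ hmem B hB) h)
      · exact (htop B hB B' hB' h1 h).symm
    calc T.card ≤ (univ : Finset (Fin n)).card := Finset.card_le_card_of_injOn f
          (fun B _ => mem_univ (f B)) hinj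
    _ = n := by simp

lemma max_card (hmax : IsMaxTubing (pathGraph n) T) : T.card = n := by
  refine le_antisymm (tubing_card_le hmax.1) ?_
  have : (univ : Finset (Fin n)).card ≤ T.card :=
    Finset.card_le_card_of_injOn (fun x => tubingDown T x)
      (fun x _ => down_mem hmax x) (fun x _ y _ h => down_inj hmax h)
  simpa using this

lemma max_of_card (hT : IsTubing (pathGraph n) T) (hcard : T.card = n) :
    IsMaxTubing (pathGraph n) T :=
  ⟨hT, fun T' hT' hsub => (Finset.eq_of_subset_of_card_le (s := T) (t := T') hsub (by
    rw [hcard]; exact tubing_card_le hT')).symm⟩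

end MTaux
namespace MTaux

open Finset

variable {n : ℕ} {S U : Finset (Finset (Fin n))}

lemma between_left (hmax : IsMaxTubing (pathGraph n) S) {u v w : Fin n}
    (huv : treeLE S u v) (h1 : v ≤ w) (h2 : w ≤ u) : treeLE S w v :=
  treeLE_between hmax huv ((min_le_right u v).trans h1) (h2.trans (le_max_left u v))

lemma between_right (hmax : IsMaxTubing (pathGraph n) S) {u v w : Fin n}
    (huv : treeLE S u v) (h1 : u ≤ w) (h2 : w ≤ v) : treeLE S w v :=
  treeLE_between hmax huv ((min_le_left u v).trans h1) (h2.trans (le_max_right u v))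

variable (hS : IsMaxTubing (pathGraph n) S) (hU : IsMaxTubing (pathGraph n) U)
include hS hU

lemma inv_of_inv_union_inc (h : invSet S ⊆ invSet U ∪ incSet U) : invSet S ⊆ invSet U := by
  rintro ⟨i, j⟩ hp
  obtain ⟨hij, hle⟩ := hp
  simp only at hij hle
  rcases Classical.em (treeLE U j i) with h1 | h1
  · exact ⟨hij, h1⟩
  rcases Classical.em (treeLE U i j) with h2 | h2
  · have h3 := h (⟨hij, hle⟩ : (i,j) ∈ invSet S)
    rcases h3 with h3 | h3
    · exact h3
    · exact absurd h2 h3.2.1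
  · obtain ⟨t, hit, htj, hUit, hUjt⟩ := sandwich hU hij h2 h1
    have hXti : treeLE S t i := between_left hS hle (le_of_lt hit) (le_of_lt htj)
    have h3 := h (⟨hit, hXti⟩ : (i,t) ∈ invSet S)
    rcases h3 with h3 | h3
    · exact absurd (treeLE_antisymm hU h3.2 hUit) (ne_of_gt hit)
    · exact absurd hUit h3.2.1

lemma union_inc_mono (h : invSet S ⊆ invSet U) :
    invSet S ∪ incSet S ⊆ invSet U ∪ incSet U := by
  rintro ⟨i, j⟩ hp
  have hp' : (i,j) ∈ invSet S ∨ (i,j) ∈ incSet S := hp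
  rcases hp' with hp' | hp'
  · exact Or.inl (h hp')
  obtain ⟨hij, hnij, hnji⟩ := hp'
  simp only at hij hnij hnji
  have hnUij : ¬ treeLE U i j := by
    intro hUij
    obtain ⟨t, hit, htj, hXit, hXjt⟩ := sandwich hS hij hnij hnji
    have hUjt : treeLE U j t := (h (⟨htj, hXjt⟩ : (t,j) ∈ invSet S)).2
    have hUtj : treeLE U t j := between_right hU hUij (le_of_lt hit) (le_of_lt htj)
    exact absurd (treeLE_antisymm hU hUtj hUjt) (ne_of_lt htj)
  rcases Classical.em (treeLE U j i) with hUji | hUji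
  · exact Or.inl ⟨hij, hUji⟩
  · exact Or.inr ⟨hij, hnUij, hUji⟩

lemma coinv_anti (h : invSet S ⊆ invSet U) : coinvSet U ⊆ coinvSet S := by
  rintro ⟨i, j⟩ hp
  obtain ⟨hij, hUij⟩ := hp
  simp only at hij hUij
  rcases Classical.em (treeLE S i j) with h1 | h1
  · exact ⟨hij, h1⟩
  rcases Classical.em (treeLE S j i) with h2 | h2
  · have h3 : treeLE U j i := (h (⟨hij, h2⟩ : (i,j) ∈ invSet S)).2
    exact absurd (treeLE_antisymm hU hUij h3) (ne_of_lt hij)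
  · obtain ⟨t, hit, htj, hXit, hXjt⟩ := sandwich hS hij h1 h2
    have hUjt : treeLE U j t := (h (⟨htj, hXjt⟩ : (t,j) ∈ invSet S)).2
    have hUtj : treeLE U t j := between_right hU hUij (le_of_lt hit) (le_of_lt htj)
    exact absurd (treeLE_antisymm hU hUtj hUjt) (ne_of_lt htj)

lemma inv_mono_of_coinv (h : coinvSet U ⊆ coinvSet S) : invSet S ⊆ invSet U := by
  rintro ⟨i, j⟩ hp
  obtain ⟨hij, hSji⟩ := hp
  simp only at hij hSji
  rcases Classical.em (treeLE U j i) with h1 | h1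
  · exact ⟨hij, h1⟩
  rcases Classical.em (treeLE U i j) with h2 | h2
  · have h3 : treeLE S i j := (h (⟨hij, h2⟩ : (i,j) ∈ coinvSet U)).2
    exact absurd (treeLE_antisymm hS h3 hSji) (ne_of_lt hij)
  · obtain ⟨t, hit, htj, hUit, hUjt⟩ := sandwich hU hij h2 h1
    have hSit : treeLE S i t := (h (⟨hit, hUit⟩ : (i,t) ∈ coinvSet U)).2
    have hSti : treeLE S t i := between_left hS hSji (le_of_lt hit) (le_of_lt htj)
    exact absurd (treeLE_antisymm hS hSit hSti) (ne_of_lt hit)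

end MTaux
namespace MTaux

open Finset

variable {n : ℕ} {T : Finset (Finset (Fin n))}

lemma iv_filter_lt {B : Finset (Fin n)} (hiv : Iv B) (t : Fin n) :
    Iv (B.filter (fun x => x < t)) := by
  intro u v w hu hv huw hwv
  rw [mem_filter] at *
  exact ⟨hiv hu.1 hv.1 huw hwv, lt_of_le_of_lt hwv hv.2⟩

lemma iv_filter_gt {B : Finset (Fin n)} (hiv : Iv B) (t : Fin n) :
    Iv (B.filter (fun x => t < x)) := by
  intro u v w hu hv huw hwv
  rw [mem_filter] at *
  exact ⟨hiv hu.1 hv.1 huw hwv, lt_of_lt_of_le hu.2 huw⟩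

section Rot

variable (hmax : IsMaxTubing (pathGraph n) T) {B : Finset (Fin n)} {b c : Fin n}
  (hB : B ∈ T) (hdb : tubingDown T b = B)
  (hdc : tubingDown T c = B.filter (fun x => x < b))

-- abbreviations local to statements:
-- L = B.filter (fun x => x < b), Y = B.filter (fun x => c < x), J = insert Y (T.erase L)

include hmax hB hdb hdc

lemma r_cL : c ∈ B.filter (fun x => x < b) := by
  rw [← hdc]; exact down_self (T := T) c

lemma r_cb : c < b := (mem_filter.1 (r_cL hmax hB hdb hdc)).2

lemma r_cB : c ∈ B := (mem_filter.1 (r_cL hmax hB hdb hdc)).1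

lemma r_bB : b ∈ B := by rw [← hdb]; exact down_self (T := T) b

lemma r_LT : B.filter (fun x => x < b) ∈ T := hdc ▸ down_mem hmax c

lemma r_bY : b ∈ B.filter (fun x => c < x) :=
  mem_filter.2 ⟨r_bB hmax hB hdb hdc, r_cb hmax hB hdb hdc⟩

lemma r_LY : B.filter (fun x => x < b) ∪ B.filter (fun x => c < x) = B := by
  have hcb := r_cb hmax hB hdb hdc
  ext z
  simp only [mem_union, mem_filter]
  constructor
  · rintro (⟨h, -⟩ | ⟨h, -⟩) <;> exact h
  · intro hz
    rcases lt_or_ge z b with h | h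
    · exact Or.inl ⟨hz, h⟩
    · exact Or.inr ⟨hz, lt_of_lt_of_le hcb h⟩

lemma r_YnotT : B.filter (fun x => c < x) ∉ T := by
  intro hY
  have hcb := r_cb hmax hB hdb hdc
  rcases hmax.1.2 _ (r_LT hmax hB hdb hdc) _ hY with h | h | h
  · exact absurd (mem_filter.1 (h (r_cL hmax hB hdb hdc))).2 (lt_irrefl c)
  · exact absurd (mem_filter.1 (h (r_bY hmax hB hdb hdc))).2 (lt_irrefl b)
  · rw [r_LY hmax hB hdb hdc] at h
    exact h (hmax.1.1 B hB)

lemma r_Ytube : IsTube (pathGraph n) (B.filter (fun x => c < x)) :=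
  tube_iff.2 ⟨⟨b, r_bY hmax hB hdb hdc⟩, iv_filter_gt (mem_iv hmax.1 hB) c⟩

lemma r_compatYA : ∀ A ∈ T, A ≠ B.filter (fun x => x < b) →
    TubeCompatible (pathGraph n) (B.filter (fun x => c < x)) A := by
  intro A hA hAL
  set L := B.filter (fun x => x < b) with hL
  set Y := B.filter (fun x => c < x) with hY
  have hYne : Y.Nonempty := ⟨b, r_bY hmax hB hdb hdc⟩
  have hAne : A.Nonempty := mem_ne hmax.1 hA
  have hYB : Y ⊆ B := filter_subset _ _
  rcases tubing_trichotomy hmax.1 hA hB with h | h | ⟨g, hg1, hg2, ⟨h1, h2⟩ | ⟨h1, h2⟩⟩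
  · -- A ⊆ B
    by_cases hbA : b ∈ A
    · have : B ⊆ A := hdb ▸ down_min hmax hA hbA
      have hAB : A = B := Finset.Subset.antisymm h this
      exact Or.inl (by rw [hAB]; exact hYB)
    · rcases iv_side (mem_iv hmax.1 hA) hbA with hside | hside
      · -- A below b, so A ⊆ L
        have hAL' : A ⊆ L := fun x hx => mem_filter.2 ⟨h hx, hside x hx⟩
        by_cases hcA : c ∈ A
        · have : L ⊆ A := hdc ▸ down_min hmax hA hcA
          exact absurd (Finset.Subset.antisymm hAL' this) hAL
        · rcases iv_side (mem_iv hmax.1 hA) hcA with hside' | hside'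
          · exact compat_symm (compat_sep hside' (fun y hy => (mem_filter.1 hy).2) hAne hYne)
          · exact Or.inr (Or.inl (fun x hx => mem_filter.2 ⟨h hx, hside' x hx⟩))
      · -- A above b
        exact Or.inr (Or.inl (fun x hx =>
          mem_filter.2 ⟨h hx, lt_trans (r_cb hmax hB hdb hdc) (hside x hx)⟩))
  · exact Or.inl (hYB.trans h)
  · -- A < g < B
    exact compat_symm (compat_sep h1 (fun y hy => h2 y (hYB hy)) hAne hYne)
  · -- B < g < A
    exact compat_sep (fun y hy => h1 y (hYB hy)) h2 hYne hAne

lemma r_Jtubing : IsTubing (pathGraph n)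
    (insert (B.filter (fun x => c < x)) (T.erase (B.filter (fun x => x < b)))) := by
  constructor
  · intro A hA
    rcases mem_insert.1 hA with rfl | hA'
    · exact r_Ytube hmax hB hdb hdc
    · exact hmax.1.1 A (mem_of_mem_erase hA')
  · intro A hA A' hA'
    rcases mem_insert.1 hA with h1 | h1 <;> rcases mem_insert.1 hA' with h2 | h2
    · subst h1; subst h2; exact Or.inl (subset_refl _)
    · subst h1
      exact r_compatYA hmax hB hdb hdc A' (mem_of_mem_erase h2) (ne_of_mem_erase h2)
    · subst h2
      exact compat_symm (r_compatYA hmax hB hdb hdc A (mem_of_mem_erase h1) (ne_of_mem_erase h1))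
    · exact hmax.1.2 A (mem_of_mem_erase h1) A' (mem_of_mem_erase h2)

lemma r_Jmax : IsMaxTubing (pathGraph n)
    (insert (B.filter (fun x => c < x)) (T.erase (B.filter (fun x => x < b)))) := by
  refine max_of_card (r_Jtubing hmax hB hdb hdc) ?_
  have h1 : B.filter (fun x => c < x) ∉ T.erase (B.filter (fun x => x < b)) :=
    fun h => r_YnotT hmax hB hdb hdc (mem_of_mem_erase h)
  rw [Finset.card_insert_of_notMem h1,
    Finset.card_erase_of_mem (r_LT hmax hB hdb hdc), max_card hmax]
  have : 0 < n := b.pos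
  omega

lemma r_downJb : tubingDown
    (insert (B.filter (fun x => c < x)) (T.erase (B.filter (fun x => x < b)))) b
    = B.filter (fun x => c < x) := by
  refine down_eq (r_Jtubing hmax hB hdb hdc) (mem_insert_self _ _) (r_bY hmax hB hdb hdc) ?_
  intro A hA hbA
  rcases mem_insert.1 hA with rfl | hA'
  · exact subset_refl _
  · have hAT := mem_of_mem_erase hA'
    rcases nested_of_mem_mem hmax.1 hAT hB hbA (r_bB hmax hB hdb hdc) with h | h
    · have : B ⊆ A := hdb ▸ down_min hmax hAT hbA
      have hAB : A = B := Finset.Subset.antisymm h this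
      exact hAB ▸ filter_subset _ _
    · exact (filter_subset _ _).trans h

lemma r_downJc : tubingDown
    (insert (B.filter (fun x => c < x)) (T.erase (B.filter (fun x => x < b)))) c
    = B := by
  have hcb := r_cb hmax hB hdb hdc
  have hbB' := r_bB hmax hB hdb hdc
  have hBL : B ≠ B.filter (fun x => x < b) := by
    intro h
    have := h ▸ hbB'
    exact absurd (mem_filter.1 this).2 (lt_irrefl b)
  refine down_eq (r_Jtubing hmax hB hdb hdc)
    (mem_insert_of_mem (mem_erase.2 ⟨hBL, hB⟩)) (r_cB hmax hB hdb hdc) ?_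
  intro A hA hcA
  rcases mem_insert.1 hA with rfl | hA'
  · exact absurd (mem_filter.1 hcA).2 (lt_irrefl c)
  · have hAT := mem_of_mem_erase hA'
    have hAL := ne_of_mem_erase hA'
    -- A ∈ T, A ≠ L, c ∈ A ⇒ B ⊆ A
    have hLA : B.filter (fun x => x < b) ⊆ A := by
      rcases nested_of_mem_mem hmax.1 hAT (r_LT hmax hB hdb hdc) hcA
        (r_cL hmax hB hdb hdc) with h | h
      · have : B.filter (fun x => x < b) ⊆ A := hdc ▸ down_min hmax hAT hcA
        exact this
      · exact h
    rcases nested_of_mem_mem hmax.1 hAT hB hcA (r_cB hmax hB hdb hdc) with h | h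
    · -- A ⊆ B: find element of A not in L, conclude b ∈ A
      obtain ⟨a, haA, haL⟩ : ∃ a, a ∈ A ∧ a ∉ B.filter (fun x => x < b) := by
        by_contra hcon
        push_neg at hcon
        exact hAL (Finset.Subset.antisymm hcon hLA)
      have hab : b ≤ a := by
        by_contra hab
        exact haL (mem_filter.2 ⟨h haA, not_le.1 hab⟩)
      have hbA : b ∈ A := (mem_iv hmax.1 hAT) hcA haA (le_of_lt hcb) hab
      exact hdb ▸ down_min hmax hAT hbA
    · exact h

lemma r_downJ_other (v : Fin n) (h1 : tubingDown T v ≠ B.filter (fun x => x < b))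
    (h2 : tubingDown T v ≠ B) :
    tubingDown (insert (B.filter (fun x => c < x)) (T.erase (B.filter (fun x => x < b)))) v
    = tubingDown T v := by
  have hcb := r_cb hmax hB hdb hdc
  set L := B.filter (fun x => x < b) with hL
  set Y := B.filter (fun x => c < x) with hYdef
  have hD : tubingDown T v ∈ T := down_mem hmax v
  have hvD : v ∈ tubingDown T v := down_self (T := T) v
  refine down_eq (r_Jtubing hmax hB hdb hdc)
    (mem_insert_of_mem (mem_erase.2 ⟨h1, hD⟩)) hvD ?_
  intro A hA hvA
  rcases mem_insert.1 hA with rfl | hA'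
  · -- A = Y; show down v ⊆ Y
    have hvY := hvA
    have hvB : v ∈ B := (filter_subset _ _) hvY
    have hDB : tubingDown T v ⊆ B := down_min hmax hB hvB
    have hbD : b ∉ tubingDown T v := by
      intro hbD
      exact h2 (Finset.Subset.antisymm hDB (hdb ▸ down_min hmax hD hbD))
    have hcD : c ∉ tubingDown T v := by
      intro hcD
      have hLD : L ⊆ tubingDown T v := hdc ▸ down_min hmax hD hcD
      refine h1 (Finset.Subset.antisymm ?_ hLD)
      intro z hz
      refine mem_filter.2 ⟨hDB hz, ?_⟩
      by_contra hzb
      exact hbD ((mem_iv hmax.1 hD) hcD hz (le_of_lt hcb) (not_lt.1 hzb))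
    intro z hz
    refine mem_filter.2 ⟨hDB hz, ?_⟩
    by_contra hcz
    have hcv : c < v := (mem_filter.1 hvY).2
    exact hcD ((mem_iv hmax.1 hD) hz hvD (not_lt.1 hcz) (le_of_lt hcv))
  · exact down_min hmax (mem_of_mem_erase hA') hvA

lemma r_inv_subset : invSet T ⊆ invSet
    (insert (B.filter (fun x => c < x)) (T.erase (B.filter (fun x => x < b)))) := by
  rintro ⟨u, w⟩ hp
  obtain ⟨huw, hle⟩ := hp
  simp only at huw hle
  refine ⟨huw, ?_⟩
  show w ∈ tubingDown _ u
  by_cases h1 : tubingDown T u = B.filter (fun x => x < b)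
  · have hu : u = c := down_inj hmax (h1.trans hdc.symm)
    rw [hu, r_downJc hmax hB hdb hdc]
    have hw : w ∈ tubingDown T u := hle
    rw [h1] at hw
    exact (filter_subset _ _) hw
  · by_cases h2 : tubingDown T u = B
    · have hu : u = b := down_inj hmax (h2.trans hdb.symm)
      rw [hu, r_downJb hmax hB hdb hdc]
      have hwB : w ∈ B := by rw [← h2]; exact hle
      refine mem_filter.2 ⟨hwB, lt_trans (r_cb hmax hB hdb hdc) ?_⟩
      rw [← hu]; exact huw
    · rw [r_downJ_other hmax hB hdb hdc u h1 h2]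
      exact hle

lemma r_inv_sup : ∀ p ∈ invSet
    (insert (B.filter (fun x => c < x)) (T.erase (B.filter (fun x => x < b)))),
    p ∈ invSet T ∨ (p.1 = c ∧ p.2 ∈ B ∧ b ≤ p.2) := by
  rintro ⟨u, w⟩ hp
  obtain ⟨huw, hle⟩ := hp
  simp only at huw hle
  replace hle : w ∈ tubingDown _ u := hle
  by_cases h1 : tubingDown T u = B.filter (fun x => x < b)
  · have hu : u = c := down_inj hmax (h1.trans hdc.symm)
    rw [hu, r_downJc hmax hB hdb hdc] at hle
    rcases lt_or_ge w b with h | h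
    · exact Or.inl ⟨huw, by rw [treeLE, h1]; exact mem_filter.2 ⟨hle, h⟩⟩
    · exact Or.inr ⟨hu, hle, h⟩
  · by_cases h2 : tubingDown T u = B
    · have hu : u = b := down_inj hmax (h2.trans hdb.symm)
      rw [hu, r_downJb hmax hB hdb hdc] at hle
      exact Or.inl ⟨huw, by rw [treeLE, h2]; exact (filter_subset _ _) hle⟩
    · rw [r_downJ_other hmax hB hdb hdc u h1 h2] at hle
      exact Or.inl ⟨huw, hle⟩

lemma r_new_inv : ((c, b) : Fin n × Fin n) ∈ invSet
      (insert (B.filter (fun x => c < x)) (T.erase (B.filter (fun x => x < b)))) ∧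
    ((c, b) : Fin n × Fin n) ∉ invSet T := by
  constructor
  · refine ⟨r_cb hmax hB hdb hdc, ?_⟩
    show b ∈ tubingDown _ c
    rw [r_downJc hmax hB hdb hdc]
    exact r_bB hmax hB hdb hdc
  · rintro ⟨-, hle⟩
    have : b ∈ tubingDown T c := hle
    rw [hdc] at this
    exact absurd (mem_filter.1 this).2 (lt_irrefl b)

lemma r_flip : FlipCover (pathGraph n) T
    (insert (B.filter (fun x => c < x)) (T.erase (B.filter (fun x => x < b)))) := by
  refine ⟨hmax, r_Jmax hmax hB hdb hdc, B.filter (fun x => x < b), B.filter (fun x => c < x),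
    r_LT hmax hB hdb hdc, mem_insert_self _ _, ?_, ?_, c, b, hdc, r_downJb hmax hB hdb hdc,
    r_cb hmax hB hdb hdc⟩
  · intro h
    have := h ▸ r_cL hmax hB hdb hdc
    exact absurd (mem_filter.1 this).2 (lt_irrefl c)
  · rw [Finset.erase_insert]
    intro h
    exact r_YnotT hmax hB hdb hdc (mem_of_mem_erase h)

end Rot

end MTaux
namespace MTaux

open Finset

variable {n : ℕ} {T : Finset (Finset (Fin n))}

lemma subset_of_tubing {J' : Finset (Finset (Fin n))} (htub : IsTubing (pathGraph n) J')
    {Z V : Finset (Fin n)} (hZ : Z ∈ J') (hV : V ∈ J') (hZV : ¬ Z ⊆ V)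
    (hsep : ∀ g, g ∉ Z → g ∉ V →
      ((∀ a ∈ V, a < g) → (∀ w ∈ Z, g < w) → False) ∧
      ((∀ w ∈ Z, w < g) → (∀ a ∈ V, g < a) → False)) :
    V ⊆ Z := by
  rcases tubing_trichotomy htub hV hZ with h | h | ⟨g, hg1, hg2, ⟨h1, h2⟩ | ⟨h1, h2⟩⟩
  · exact h
  · exact absurd h hZV
  · exact ((hsep g hg2 hg1).1 h1 h2).elim
  · exact ((hsep g hg2 hg1).2 h1 h2).elim

lemma parent_spec (hT : IsMaxTubing (pathGraph n) T) (x : Fin n)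
    (hXuniv : tubingDown T x ≠ (univ : Finset (Fin n))) :
    ∃ P ∈ T, x ∈ P ∧ P ≠ tubingDown T x ∧ tubingDown T x ⊆ P ∧
      ∀ A ∈ T, x ∈ A → A ≠ tubingDown T x → P ⊆ A := by
  have hfil : (T.filter (fun A => x ∈ A ∧ A ≠ tubingDown T x)).Nonempty :=
    ⟨univ, mem_filter.2 ⟨univ_mem hT x, mem_univ x, fun h => hXuniv h.symm⟩⟩
  obtain ⟨P, hPmem, hPmin⟩ := Finset.exists_min_image _ (fun A => A.card) hfil
  rw [mem_filter] at hPmem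
  obtain ⟨hPT, hxP, hPX⟩ := hPmem
  have hmin : ∀ A ∈ T, x ∈ A → A ≠ tubingDown T x → P ⊆ A := by
    intro A hA hxA hAX
    rcases nested_of_mem_mem hT.1 hPT hA hxP hxA with h | h
    · exact h
    · rw [Finset.eq_of_subset_of_card_le h (hPmin A (mem_filter.2 ⟨hA, hxA, hAX⟩))]
  exact ⟨P, hPT, hxP, hPX, down_min hT hPT hxP, hmin⟩

section Completion

variable (hT : IsMaxTubing (pathGraph n) T) {x p : Fin n} {P Z : Finset (Fin n)}
  (hP : P ∈ T) (hxP : x ∈ P) (hdp : tubingDown T p = P)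
  (hPX : P ≠ tubingDown T x)
  (hPmin : ∀ A ∈ T, x ∈ A → A ≠ tubingDown T x → P ⊆ A)
  (hZS : Z ∉ T.erase (tubingDown T x)) (hZX : Z ≠ tubingDown T x)
  (hJ : IsMaxTubing (pathGraph n) (insert Z (T.erase (tubingDown T x))))

include hT hP hxP hdp hPX hPmin hZS hZX hJ

/-- the top of `Z` in the new tubing is `x` or `p` -/
lemma c_top_cases {z : Fin n}
    (hz : tubingDown (insert Z (T.erase (tubingDown T x))) z = Z) : z = x ∨ z = p := by
  by_contra hcon
  push_neg at hcon
  obtain ⟨hzx, hzp⟩ := hcon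
  have hgxJ := down_mem hJ x
  have hgxZ : tubingDown (insert Z (T.erase (tubingDown T x))) x ≠ Z := by
    intro h
    exact hzx (down_inj hJ (hz.trans h.symm))
  have hgxS : tubingDown (insert Z (T.erase (tubingDown T x))) x ∈ T.erase (tubingDown T x) := by
    rcases mem_insert.1 hgxJ with h | h
    · exact absurd h hgxZ
    · exact h
  obtain ⟨v, hv⟩ := down_surj hT (mem_of_mem_erase hgxS)
  have hvx : v ≠ x := by
    intro h
    apply (mem_erase.1 hgxS).1
    rw [← hv, h]
  have hvz : v = z := by
    by_contra hvz
    have h1 : tubingDown T v ∈ T.erase (tubingDown T x) :=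
      mem_erase.2 ⟨fun h => hvx (down_inj hT h), down_mem hT v⟩
    have h2 : tubingDown (insert Z (T.erase (tubingDown T x))) v ≠ Z :=
      fun h => hvz (down_inj hJ (h.trans hz.symm))
    have h3 : tubingDown (insert Z (T.erase (tubingDown T x))) v ∈ T.erase (tubingDown T x) := by
      rcases mem_insert.1 (down_mem hJ v) with h | h
      · exact absurd h h2
      · exact h
    have h4 : tubingDown (insert Z (T.erase (tubingDown T x))) v = tubingDown T v :=
      Finset.Subset.antisymm
        (down_min hJ (mem_insert_of_mem h1) (down_self (T := T) v))
        (down_min hT (mem_of_mem_erase h3) (down_self (T := insert Z (T.erase (tubingDown T x))) v))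
    exact hvx (down_inj hJ (h4.trans hv))
  rw [hvz] at hv
  have hDT : tubingDown (insert Z (T.erase (tubingDown T x))) x ∈ T := mem_of_mem_erase hgxS
  have hDX : tubingDown (insert Z (T.erase (tubingDown T x))) x ≠ tubingDown T x :=
    (mem_erase.1 hgxS).1
  have hDP1 : P ⊆ tubingDown (insert Z (T.erase (tubingDown T x))) x :=
    hPmin _ hDT (down_self (T := insert Z (T.erase (tubingDown T x))) x) hDX
  have hDP2 : tubingDown (insert Z (T.erase (tubingDown T x))) x ⊆ P :=
    down_min hJ (mem_insert_of_mem (mem_erase.2 ⟨hPX, hP⟩)) hxP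
  exact hzp (down_inj hT (hv.trans ((Finset.Subset.antisymm hDP2 hDP1).trans hdp.symm)))

end Completion

end MTaux
namespace MTaux

open Finset

variable {n : ℕ} {T : Finset (Finset (Fin n))}

section CompletionLeft

variable (hT : IsMaxTubing (pathGraph n) T) {x p : Fin n} {P Z : Finset (Fin n)}
  (hP : P ∈ T) (hxP : x ∈ P) (hdp : tubingDown T p = P)
  (hPX : P ≠ tubingDown T x)
  (hZS : Z ∉ T.erase (tubingDown T x)) (hZX : Z ≠ tubingDown T x)
  (hJ : IsMaxTubing (pathGraph n) (insert Z (T.erase (tubingDown T x))))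
  (hshape : tubingDown T x = P.filter (fun w => w < p))

include hT hP hxP hdp hPX hZS hZX hJ hshape

lemma c_left_ne_x (hz : tubingDown (insert Z (T.erase (tubingDown T x))) x = Z) : False := by
  have hZJ : Z ∈ insert Z (T.erase (tubingDown T x)) := mem_insert_self _ _
  have hxX : x ∈ tubingDown T x := down_self (T := T) x
  have hxp : x < p := by
    rw [hshape] at hxX
    exact (mem_filter.1 hxX).2
  have hxX' : x ∈ tubingDown T x := down_self (T := T) x
  have hpP : p ∈ P := by rw [← hdp]; exact down_self (T := T) p
  have hxZ : x ∈ Z := by rw [← hz]; exact down_self (T := insert Z (T.erase (tubingDown T x))) x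
  have hZP : Z ⊆ P := by
    rw [← hz]
    exact down_min hJ (mem_insert_of_mem (mem_erase.2 ⟨hPX, hP⟩)) hxP
  have hZT : Z ∉ T := fun h => hZS (mem_erase.2 ⟨hZX, h⟩)
  have hZiv : Iv Z := mem_iv hJ.1 hZJ
  have hXiv : Iv (tubingDown T x) := down_iv hT x
  have Ptop : ∀ A ∈ T, p ∈ A → A ⊆ P → A = P := by
    have h := down_isTop hT p
    rw [hdp] at h
    exact h
  -- Step A : X ⊆ Z
  have hXZ : tubingDown T x ⊆ Z := by
    intro w hw
    rcases lt_trichotomy w x with hwx | rfl | hxw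
    · have hC1T : (tubingDown T x).filter (fun u => u < x) ∈ T :=
        filter_lt_mem hT (down_mem hT x) hxX (down_isTop hT x) ⟨w, mem_filter.2 ⟨hw, hwx⟩⟩
      have hC1X : (tubingDown T x).filter (fun u => u < x) ≠ tubingDown T x := by
        intro h
        rw [← h] at hxX'
        exact absurd (mem_filter.1 hxX').2 (lt_irrefl x)
      have hsub := subset_of_tubing hJ.1 hZJ
        (mem_insert_of_mem (mem_erase.2 ⟨hC1X, hC1T⟩))
        (fun hsub => absurd (mem_filter.1 (hsub hxZ)).2 (lt_irrefl x)) ?_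
      · exact hsub (mem_filter.2 ⟨hw, hwx⟩)
      · intro g hgZ hgC1
        constructor
        · intro h1 h2
          have hwg := h1 w (mem_filter.2 ⟨hw, hwx⟩)
          have hgx := h2 x hxZ
          exact hgC1 (mem_filter.2 ⟨hXiv hw hxX (le_of_lt hwg) (le_of_lt hgx), hgx⟩)
        · intro h1 h2
          exact absurd (lt_trans (lt_trans (h1 x hxZ) (h2 w (mem_filter.2 ⟨hw, hwx⟩))) hwx)
            (lt_irrefl x)
    · exact hxZ
    · have hC2T : (tubingDown T x).filter (fun u => x < u) ∈ T :=
        filter_gt_mem hT (down_mem hT x) hxX (down_isTop hT x) ⟨w, mem_filter.2 ⟨hw, hxw⟩⟩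
      have hC2X : (tubingDown T x).filter (fun u => x < u) ≠ tubingDown T x := by
        intro h
        rw [← h] at hxX'
        exact absurd (mem_filter.1 hxX').2 (lt_irrefl x)
      have hsub := subset_of_tubing hJ.1 hZJ
        (mem_insert_of_mem (mem_erase.2 ⟨hC2X, hC2T⟩))
        (fun hsub => absurd (mem_filter.1 (hsub hxZ)).2 (lt_irrefl x)) ?_
      · exact hsub (mem_filter.2 ⟨hw, hxw⟩)
      · intro g hgZ hgC2
        constructor
        · intro h1 h2
          exact absurd (lt_trans hxw (lt_trans (h1 w (mem_filter.2 ⟨hw, hxw⟩)) (h2 x hxZ)))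
            (lt_irrefl x)
        · intro h1 h2
          have hxg := h1 x hxZ
          have hgw := h2 w (mem_filter.2 ⟨hw, hxw⟩)
          exact hgC2 (mem_filter.2 ⟨hXiv hxX hw (le_of_lt hxg) (le_of_lt hgw), hxg⟩)
  -- Step B : Z ⊆ X
  have hZsubX : Z ⊆ tubingDown T x := by
    by_contra hcon
    obtain ⟨w, hwZ, hwX⟩ := Finset.not_subset.1 hcon
    have hwP : w ∈ P := hZP hwZ
    have hpw : p ≤ w := by
      by_contra h'
      exact hwX (by rw [hshape]; exact mem_filter.2 ⟨hwP, not_le.1 h'⟩)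
    have hpZ : p ∈ Z := hZiv hxZ hwZ (le_of_lt hxp) hpw
    obtain ⟨u, huP, huZ⟩ := Finset.not_subset.1
      (show ¬ P ⊆ Z from fun h => hZT (by rw [Finset.Subset.antisymm hZP h]; exact hP))
    have hpu : p < u := by
      rcases lt_trichotomy u p with h | h | h
      · exact absurd (hXZ (by rw [hshape]; exact mem_filter.2 ⟨huP, h⟩)) huZ
      · rw [h] at huZ; exact absurd hpZ huZ
      · exact h
    have hQT : P.filter (fun v => p < v) ∈ T :=
      filter_gt_mem hT hP hpP Ptop ⟨u, mem_filter.2 ⟨huP, hpu⟩⟩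
    have hQX : P.filter (fun v => p < v) ≠ tubingDown T x := by
      intro h
      rw [← h] at hxX'
      exact absurd (lt_trans hxp (mem_filter.1 hxX').2) (lt_irrefl x)
    have hQZ := subset_of_tubing hJ.1 hZJ
      (mem_insert_of_mem (mem_erase.2 ⟨hQX, hQT⟩))
      (fun hsub => absurd (lt_trans hxp (mem_filter.1 (hsub hxZ)).2) (lt_irrefl x)) ?_
    · exact huZ (hQZ (mem_filter.2 ⟨huP, hpu⟩))
    · intro g hgZ hgQ
      constructor
      · intro h1 h2
        have := lt_trans (lt_trans (lt_trans hpu (h1 u (mem_filter.2 ⟨huP, hpu⟩))) (h2 x hxZ)) hxp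
        exact absurd this (lt_irrefl p)
      · intro h1 h2
        have hpg := h1 p hpZ
        have hgu := h2 u (mem_filter.2 ⟨huP, hpu⟩)
        exact hgQ (mem_filter.2 ⟨(mem_iv hT.1 hP) hpP huP (le_of_lt hpg) (le_of_lt hgu), hpg⟩)
  exact hZX (Finset.Subset.antisymm hZsubX hXZ)

lemma c_left_zp (hz : tubingDown (insert Z (T.erase (tubingDown T x))) p = Z) :
    Z = P.filter (fun w => x < w) := by
  have hZJ : Z ∈ insert Z (T.erase (tubingDown T x)) := mem_insert_self _ _
  have hxX : x ∈ tubingDown T x := down_self (T := T) x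
  have hxX' : x ∈ tubingDown T x := down_self (T := T) x
  have hxp : x < p := by
    rw [hshape] at hxX
    exact (mem_filter.1 hxX).2
  have hpP : p ∈ P := by rw [← hdp]; exact down_self (T := T) p
  have hpZ : p ∈ Z := by rw [← hz]; exact down_self (T := insert Z (T.erase (tubingDown T x))) p
  have hZP : Z ⊆ P := by
    rw [← hz]
    exact down_min hJ (mem_insert_of_mem (mem_erase.2 ⟨hPX, hP⟩)) hpP
  have hZT : Z ∉ T := fun h => hZS (mem_erase.2 ⟨hZX, h⟩)
  have hZiv : Iv Z := mem_iv hJ.1 hZJ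
  have hXiv : Iv (tubingDown T x) := down_iv hT x
  have hXP : tubingDown T x ⊆ P := by rw [hshape]; exact filter_subset _ _
  have hpX : p ∉ tubingDown T x := by
    rw [hshape]
    intro h
    exact absurd (mem_filter.1 h).2 (lt_irrefl p)
  have Ptop : ∀ A ∈ T, p ∈ A → A ⊆ P → A = P := by
    have h := down_isTop hT p
    rw [hdp] at h
    exact h
  -- Step A : C2 ⊆ Z
  have hC2Z : (tubingDown T x).filter (fun u => x < u) ⊆ Z := by
    rcases Finset.eq_empty_or_nonempty ((tubingDown T x).filter (fun u => x < u)) with he | hne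
    · rw [he]; exact empty_subset _
    · obtain ⟨w0, hw0⟩ := hne
      have hw0X := (mem_filter.1 hw0).1
      have hxw0 := (mem_filter.1 hw0).2
      have hw0p : w0 < p := by
        have := hshape ▸ hw0X
        exact (mem_filter.1 this).2
      have hC2T : (tubingDown T x).filter (fun u => x < u) ∈ T :=
        filter_gt_mem hT (down_mem hT x) hxX' (down_isTop hT x) ⟨w0, hw0⟩
      have hC2X : (tubingDown T x).filter (fun u => x < u) ≠ tubingDown T x := by
        intro h
        rw [← h] at hxX'
        exact absurd (mem_filter.1 hxX').2 (lt_irrefl x)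
      refine subset_of_tubing hJ.1 hZJ
        (mem_insert_of_mem (mem_erase.2 ⟨hC2X, hC2T⟩))
        (fun hsub => hpX (mem_of_mem_filter p (hsub hpZ))) ?_
      intro g hgZ hgC2
      constructor
      · intro h1 h2
        have hw0g := h1 w0 hw0
        have hgp := h2 p hpZ
        have hgP : g ∈ P := (mem_iv hT.1 hP) (hXP hw0X) hpP (le_of_lt hw0g) (le_of_lt hgp)
        have hgX : g ∈ tubingDown T x := by rw [hshape]; exact mem_filter.2 ⟨hgP, hgp⟩
        exact hgC2 (mem_filter.2 ⟨hgX, lt_trans hxw0 hw0g⟩)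
      · intro h1 h2
        exact absurd (lt_trans (lt_trans (h1 p hpZ) (h2 w0 hw0)) hw0p) (lt_irrefl p)
  -- Step B : Q ⊆ Z
  have hQZ : P.filter (fun v => p < v) ⊆ Z := by
    rcases Finset.eq_empty_or_nonempty (P.filter (fun v => p < v)) with he | hne
    · rw [he]; exact empty_subset _
    · obtain ⟨w0, hw0⟩ := hne
      have hw0P := (mem_filter.1 hw0).1
      have hpw0 := (mem_filter.1 hw0).2
      have hQT : P.filter (fun v => p < v) ∈ T := filter_gt_mem hT hP hpP Ptop ⟨w0, hw0⟩
      have hQX : P.filter (fun v => p < v) ≠ tubingDown T x := by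
        intro h
        rw [← h] at hxX'
        exact absurd (lt_trans hxp (mem_filter.1 hxX').2) (lt_irrefl x)
      refine subset_of_tubing hJ.1 hZJ
        (mem_insert_of_mem (mem_erase.2 ⟨hQX, hQT⟩))
        (fun hsub => absurd (mem_filter.1 (hsub hpZ)).2 (lt_irrefl p)) ?_
      intro g hgZ hgQ
      constructor
      · intro h1 h2
        exact absurd (lt_trans hpw0 (lt_trans (h1 w0 hw0) (h2 p hpZ))) (lt_irrefl p)
      · intro h1 h2
        have hpg := h1 p hpZ
        have hgw0 := h2 w0 hw0
        exact hgQ (mem_filter.2 ⟨(mem_iv hT.1 hP) hpP hw0P (le_of_lt hpg) (le_of_lt hgw0), hpg⟩)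
  -- Step C : x ∉ Z
  have hxZ : x ∉ Z := by
    intro hxZ
    have hC1Z : (tubingDown T x).filter (fun u => u < x) ⊆ Z := by
      rcases Finset.eq_empty_or_nonempty ((tubingDown T x).filter (fun u => u < x)) with he | hne
      · rw [he]; exact empty_subset _
      · obtain ⟨w0, hw0⟩ := hne
        have hw0X := (mem_filter.1 hw0).1
        have hw0x := (mem_filter.1 hw0).2
        have hC1T : (tubingDown T x).filter (fun u => u < x) ∈ T :=
          filter_lt_mem hT (down_mem hT x) hxX' (down_isTop hT x) ⟨w0, hw0⟩
        have hC1X : (tubingDown T x).filter (fun u => u < x) ≠ tubingDown T x := by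
          intro h
          rw [← h] at hxX'
          exact absurd (mem_filter.1 hxX').2 (lt_irrefl x)
        refine subset_of_tubing hJ.1 hZJ
          (mem_insert_of_mem (mem_erase.2 ⟨hC1X, hC1T⟩))
          (fun hsub => hpX (mem_of_mem_filter p (hsub hpZ))) ?_
        intro g hgZ hgC1
        constructor
        · intro h1 h2
          have hw0g := h1 w0 hw0
          have hgx := h2 x hxZ
          exact hgC1 (mem_filter.2 ⟨hXiv hw0X hxX' (le_of_lt hw0g) (le_of_lt hgx), hgx⟩)
        · intro h1 h2
          exact absurd (lt_trans (lt_trans (h1 x hxZ) (h2 w0 hw0)) hw0x) (lt_irrefl x)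
    have hPZ : P ⊆ Z := by
      intro y hyP
      rcases lt_trichotomy y p with hyp | rfl | hpy
      · have hyX : y ∈ tubingDown T x := by rw [hshape]; exact mem_filter.2 ⟨hyP, hyp⟩
        rcases lt_trichotomy y x with hyx | rfl | hxy
        · exact hC1Z (mem_filter.2 ⟨hyX, hyx⟩)
        · exact hxZ
        · exact hC2Z (mem_filter.2 ⟨hyX, hxy⟩)
      · exact hpZ
      · exact hQZ (mem_filter.2 ⟨hyP, hpy⟩)
    exact hZT (by rw [Finset.Subset.antisymm hZP hPZ]; exact hP)
  -- Step D : conclusion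
  ext w
  simp only [mem_filter]
  constructor
  · intro hwZ
    refine ⟨hZP hwZ, ?_⟩
    rcases lt_trichotomy w x with hwx | rfl | hxw
    · exact absurd (hZiv hwZ hpZ (le_of_lt hwx) (le_of_lt hxp)) hxZ
    · exact absurd hwZ hxZ
    · exact hxw
  · rintro ⟨hwP, hxw⟩
    rcases lt_trichotomy w p with hwp | rfl | hpw
    · exact hC2Z (mem_filter.2 ⟨by rw [hshape]; exact mem_filter.2 ⟨hwP, hwp⟩, hxw⟩)
    · exact hpZ
    · exact hQZ (mem_filter.2 ⟨hwP, hpw⟩)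

end CompletionLeft

end MTaux
namespace MTaux

open Finset

variable {n : ℕ} {T : Finset (Finset (Fin n))}

section CompletionRight

variable (hT : IsMaxTubing (pathGraph n) T) {x p : Fin n} {P Z : Finset (Fin n)}
  (hP : P ∈ T) (hxP : x ∈ P) (hdp : tubingDown T p = P)
  (hPX : P ≠ tubingDown T x)
  (hZS : Z ∉ T.erase (tubingDown T x)) (hZX : Z ≠ tubingDown T x)
  (hJ : IsMaxTubing (pathGraph n) (insert Z (T.erase (tubingDown T x))))
  (hshape : tubingDown T x = P.filter (fun w => p < w))

include hT hP hxP hdp hPX hZS hZX hJ hshape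

lemma c_right_ne_x (hz : tubingDown (insert Z (T.erase (tubingDown T x))) x = Z) : False := by
  have hZJ : Z ∈ insert Z (T.erase (tubingDown T x)) := mem_insert_self _ _
  have hxX : x ∈ tubingDown T x := down_self (T := T) x
  have hxX' : x ∈ tubingDown T x := down_self (T := T) x
  have hpx : p < x := by
    rw [hshape] at hxX
    exact (mem_filter.1 hxX).2
  have hpP : p ∈ P := by rw [← hdp]; exact down_self (T := T) p
  have hxZ : x ∈ Z := by rw [← hz]; exact down_self (T := insert Z (T.erase (tubingDown T x))) x
  have hZP : Z ⊆ P := by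
    rw [← hz]
    exact down_min hJ (mem_insert_of_mem (mem_erase.2 ⟨hPX, hP⟩)) hxP
  have hZT : Z ∉ T := fun h => hZS (mem_erase.2 ⟨hZX, h⟩)
  have hZiv : Iv Z := mem_iv hJ.1 hZJ
  have hXiv : Iv (tubingDown T x) := down_iv hT x
  have Ptop : ∀ A ∈ T, p ∈ A → A ⊆ P → A = P := by
    have h := down_isTop hT p
    rw [hdp] at h
    exact h
  -- Step A : X ⊆ Z (chirality-free)
  have hXZ : tubingDown T x ⊆ Z := by
    intro w hw
    rcases lt_trichotomy w x with hwx | rfl | hxw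
    · have hC1T : (tubingDown T x).filter (fun u => u < x) ∈ T :=
        filter_lt_mem hT (down_mem hT x) hxX' (down_isTop hT x) ⟨w, mem_filter.2 ⟨hw, hwx⟩⟩
      have hC1X : (tubingDown T x).filter (fun u => u < x) ≠ tubingDown T x := by
        intro h
        rw [← h] at hxX'
        exact absurd (mem_filter.1 hxX').2 (lt_irrefl x)
      have hsub := subset_of_tubing hJ.1 hZJ
        (mem_insert_of_mem (mem_erase.2 ⟨hC1X, hC1T⟩))
        (fun hsub => absurd (mem_filter.1 (hsub hxZ)).2 (lt_irrefl x)) ?_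
      · exact hsub (mem_filter.2 ⟨hw, hwx⟩)
      · intro g hgZ hgC1
        constructor
        · intro h1 h2
          have hwg := h1 w (mem_filter.2 ⟨hw, hwx⟩)
          have hgx := h2 x hxZ
          exact hgC1 (mem_filter.2 ⟨hXiv hw hxX' (le_of_lt hwg) (le_of_lt hgx), hgx⟩)
        · intro h1 h2
          exact absurd (lt_trans (lt_trans (h1 x hxZ) (h2 w (mem_filter.2 ⟨hw, hwx⟩))) hwx)
            (lt_irrefl x)
    · exact hxZ
    · have hC2T : (tubingDown T x).filter (fun u => x < u) ∈ T :=
        filter_gt_mem hT (down_mem hT x) hxX' (down_isTop hT x) ⟨w, mem_filter.2 ⟨hw, hxw⟩⟩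
      have hC2X : (tubingDown T x).filter (fun u => x < u) ≠ tubingDown T x := by
        intro h
        rw [← h] at hxX'
        exact absurd (mem_filter.1 hxX').2 (lt_irrefl x)
      have hsub := subset_of_tubing hJ.1 hZJ
        (mem_insert_of_mem (mem_erase.2 ⟨hC2X, hC2T⟩))
        (fun hsub => absurd (mem_filter.1 (hsub hxZ)).2 (lt_irrefl x)) ?_
      · exact hsub (mem_filter.2 ⟨hw, hxw⟩)
      · intro g hgZ hgC2
        constructor
        · intro h1 h2
          exact absurd (lt_trans hxw (lt_trans (h1 w (mem_filter.2 ⟨hw, hxw⟩)) (h2 x hxZ)))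
            (lt_irrefl x)
        · intro h1 h2
          have hxg := h1 x hxZ
          have hgw := h2 w (mem_filter.2 ⟨hw, hxw⟩)
          exact hgC2 (mem_filter.2 ⟨hXiv hxX' hw (le_of_lt hxg) (le_of_lt hgw), hxg⟩)
  -- Step B : Z ⊆ X
  have hZsubX : Z ⊆ tubingDown T x := by
    by_contra hcon
    obtain ⟨w, hwZ, hwX⟩ := Finset.not_subset.1 hcon
    have hwP : w ∈ P := hZP hwZ
    have hwp : w ≤ p := by
      by_contra h'
      exact hwX (by rw [hshape]; exact mem_filter.2 ⟨hwP, not_le.1 h'⟩)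
    have hpZ : p ∈ Z := hZiv hwZ hxZ hwp (le_of_lt hpx)
    obtain ⟨u, huP, huZ⟩ := Finset.not_subset.1
      (show ¬ P ⊆ Z from fun h => hZT (by rw [Finset.Subset.antisymm hZP h]; exact hP))
    have hup : u < p := by
      rcases lt_trichotomy u p with h | h | h
      · exact h
      · rw [h] at huZ; exact absurd hpZ huZ
      · exact absurd (hXZ (by rw [hshape]; exact mem_filter.2 ⟨huP, h⟩)) huZ
    have hQT : P.filter (fun v => v < p) ∈ T :=
      filter_lt_mem hT hP hpP Ptop ⟨u, mem_filter.2 ⟨huP, hup⟩⟩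
    have hQX : P.filter (fun v => v < p) ≠ tubingDown T x := by
      intro h
      rw [← h] at hxX'
      exact absurd (lt_trans hpx (mem_filter.1 hxX').2) (lt_irrefl p)
    have hQZ := subset_of_tubing hJ.1 hZJ
      (mem_insert_of_mem (mem_erase.2 ⟨hQX, hQT⟩))
      (fun hsub => absurd (lt_trans hpx (mem_filter.1 (hsub hxZ)).2) (lt_irrefl p)) ?_
    · exact huZ (hQZ (mem_filter.2 ⟨huP, hup⟩))
    · intro g hgZ hgQ
      constructor
      · intro h1 h2
        have hug := h1 u (mem_filter.2 ⟨huP, hup⟩)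
        have hgp := h2 p hpZ
        exact hgQ (mem_filter.2 ⟨(mem_iv hT.1 hP) huP hpP (le_of_lt hug) (le_of_lt hgp), hgp⟩)
      · intro h1 h2
        have := lt_trans (lt_trans (h1 x hxZ) (h2 u (mem_filter.2 ⟨huP, hup⟩))) (lt_trans hup hpx)
        exact absurd this (lt_irrefl x)
  exact hZX (Finset.Subset.antisymm hZsubX hXZ)

lemma c_right_zp (hz : tubingDown (insert Z (T.erase (tubingDown T x))) p = Z) :
    Z = P.filter (fun w => w < x) := by
  have hZJ : Z ∈ insert Z (T.erase (tubingDown T x)) := mem_insert_self _ _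
  have hxX : x ∈ tubingDown T x := down_self (T := T) x
  have hxX' : x ∈ tubingDown T x := down_self (T := T) x
  have hpx : p < x := by
    rw [hshape] at hxX
    exact (mem_filter.1 hxX).2
  have hpP : p ∈ P := by rw [← hdp]; exact down_self (T := T) p
  have hpZ : p ∈ Z := by rw [← hz]; exact down_self (T := insert Z (T.erase (tubingDown T x))) p
  have hZP : Z ⊆ P := by
    rw [← hz]
    exact down_min hJ (mem_insert_of_mem (mem_erase.2 ⟨hPX, hP⟩)) hpP
  have hZT : Z ∉ T := fun h => hZS (mem_erase.2 ⟨hZX, h⟩)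
  have hZiv : Iv Z := mem_iv hJ.1 hZJ
  have hXiv : Iv (tubingDown T x) := down_iv hT x
  have hXP : tubingDown T x ⊆ P := by rw [hshape]; exact filter_subset _ _
  have hpX : p ∉ tubingDown T x := by
    rw [hshape]
    intro h
    exact absurd (mem_filter.1 h).2 (lt_irrefl p)
  have Ptop : ∀ A ∈ T, p ∈ A → A ⊆ P → A = P := by
    have h := down_isTop hT p
    rw [hdp] at h
    exact h
  -- Step A : C1 ⊆ Z
  have hC1Z : (tubingDown T x).filter (fun u => u < x) ⊆ Z := by
    rcases Finset.eq_empty_or_nonempty ((tubingDown T x).filter (fun u => u < x)) with he | hne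
    · rw [he]; exact empty_subset _
    · obtain ⟨w0, hw0⟩ := hne
      have hw0X := (mem_filter.1 hw0).1
      have hw0x := (mem_filter.1 hw0).2
      have hpw0 : p < w0 := by
        have := hshape ▸ hw0X
        exact (mem_filter.1 this).2
      have hC1T : (tubingDown T x).filter (fun u => u < x) ∈ T :=
        filter_lt_mem hT (down_mem hT x) hxX' (down_isTop hT x) ⟨w0, hw0⟩
      have hC1X : (tubingDown T x).filter (fun u => u < x) ≠ tubingDown T x := by
        intro h
        rw [← h] at hxX'
        exact absurd (mem_filter.1 hxX').2 (lt_irrefl x)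
      refine subset_of_tubing hJ.1 hZJ
        (mem_insert_of_mem (mem_erase.2 ⟨hC1X, hC1T⟩))
        (fun hsub => hpX (mem_of_mem_filter p (hsub hpZ))) ?_
      intro g hgZ hgC1
      constructor
      · intro h1 h2
        exact absurd (lt_trans hpw0 (lt_trans (h1 w0 hw0) (h2 p hpZ))) (lt_irrefl p)
      · intro h1 h2
        have hpg := h1 p hpZ
        have hgw0 := h2 w0 hw0
        have hgP : g ∈ P := (mem_iv hT.1 hP) hpP (hXP hw0X) (le_of_lt hpg) (le_of_lt hgw0)
        have hgX : g ∈ tubingDown T x := by rw [hshape]; exact mem_filter.2 ⟨hgP, hpg⟩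
        exact hgC1 (mem_filter.2 ⟨hgX, lt_trans hgw0 hw0x⟩)
  -- Step B : Q' ⊆ Z
  have hQZ : P.filter (fun v => v < p) ⊆ Z := by
    rcases Finset.eq_empty_or_nonempty (P.filter (fun v => v < p)) with he | hne
    · rw [he]; exact empty_subset _
    · obtain ⟨w0, hw0⟩ := hne
      have hw0P := (mem_filter.1 hw0).1
      have hw0p := (mem_filter.1 hw0).2
      have hQT : P.filter (fun v => v < p) ∈ T := filter_lt_mem hT hP hpP Ptop ⟨w0, hw0⟩
      have hQX : P.filter (fun v => v < p) ≠ tubingDown T x := by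
        intro h
        rw [← h] at hxX'
        exact absurd (lt_trans hpx (mem_filter.1 hxX').2) (lt_irrefl p)
      refine subset_of_tubing hJ.1 hZJ
        (mem_insert_of_mem (mem_erase.2 ⟨hQX, hQT⟩))
        (fun hsub => absurd (mem_filter.1 (hsub hpZ)).2 (lt_irrefl p)) ?_
      intro g hgZ hgQ
      constructor
      · intro h1 h2
        have hw0g := h1 w0 hw0
        have hgp := h2 p hpZ
        exact hgQ (mem_filter.2 ⟨(mem_iv hT.1 hP) hw0P hpP (le_of_lt hw0g) (le_of_lt hgp), hgp⟩)
      · intro h1 h2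
        exact absurd (lt_trans (lt_trans (h1 p hpZ) (h2 w0 hw0)) hw0p) (lt_irrefl p)
  -- Step C : x ∉ Z
  have hxZ : x ∉ Z := by
    intro hxZ
    have hC2Z : (tubingDown T x).filter (fun u => x < u) ⊆ Z := by
      rcases Finset.eq_empty_or_nonempty ((tubingDown T x).filter (fun u => x < u)) with he | hne
      · rw [he]; exact empty_subset _
      · obtain ⟨w0, hw0⟩ := hne
        have hw0X := (mem_filter.1 hw0).1
        have hxw0 := (mem_filter.1 hw0).2
        have hC2T : (tubingDown T x).filter (fun u => x < u) ∈ T :=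
          filter_gt_mem hT (down_mem hT x) hxX' (down_isTop hT x) ⟨w0, hw0⟩
        have hC2X : (tubingDown T x).filter (fun u => x < u) ≠ tubingDown T x := by
          intro h
          rw [← h] at hxX'
          exact absurd (mem_filter.1 hxX').2 (lt_irrefl x)
        refine subset_of_tubing hJ.1 hZJ
          (mem_insert_of_mem (mem_erase.2 ⟨hC2X, hC2T⟩))
          (fun hsub => hpX (mem_of_mem_filter p (hsub hpZ))) ?_
        intro g hgZ hgC2
        constructor
        · intro h1 h2
          exact absurd (lt_trans hxw0 (lt_trans (h1 w0 hw0) (h2 x hxZ))) (lt_irrefl x)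
        · intro h1 h2
          have hxg := h1 x hxZ
          have hgw0 := h2 w0 hw0
          exact hgC2 (mem_filter.2 ⟨hXiv hxX' hw0X (le_of_lt hxg) (le_of_lt hgw0), hxg⟩)
    have hPZ : P ⊆ Z := by
      intro y hyP
      rcases lt_trichotomy y p with hyp | rfl | hpy
      · exact hQZ (mem_filter.2 ⟨hyP, hyp⟩)
      · exact hpZ
      · have hyX : y ∈ tubingDown T x := by rw [hshape]; exact mem_filter.2 ⟨hyP, hpy⟩
        rcases lt_trichotomy y x with hyx | rfl | hxy
        · exact hC1Z (mem_filter.2 ⟨hyX, hyx⟩)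
        · exact hxZ
        · exact hC2Z (mem_filter.2 ⟨hyX, hxy⟩)
    exact hZT (by rw [Finset.Subset.antisymm hZP hPZ]; exact hP)
  -- Step D
  ext w
  simp only [mem_filter]
  constructor
  · intro hwZ
    refine ⟨hZP hwZ, ?_⟩
    rcases lt_trichotomy w x with hwx | rfl | hxw
    · exact hwx
    · exact absurd hwZ hxZ
    · exact absurd (hZiv hpZ hwZ (le_of_lt hpx) (le_of_lt hxw)) hxZ
  · rintro ⟨hwP, hwx⟩
    rcases lt_trichotomy w p with hwp | rfl | hpw
    · exact hQZ (mem_filter.2 ⟨hwP, hwp⟩)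
    · exact hpZ
    · exact hC1Z (mem_filter.2 ⟨by rw [hshape]; exact mem_filter.2 ⟨hwP, hpw⟩, hwx⟩)

end CompletionRight

end MTaux
namespace MTaux

open Finset

variable {n : ℕ}

lemma flip_inv_mono {T J : Finset (Finset (Fin n))} (h : FlipCover (pathGraph n) T J) :
    invSet T ⊆ invSet J := by
  obtain ⟨hT, hJ, X, Y, hXT, hYJ, hXY, herase, x, y, hdx, hdy, hxy⟩ := h
  subst hdx
  have hJeq : J = insert Y (T.erase (tubingDown T x)) := by
    rw [herase]
    exact (Finset.insert_erase hYJ).symm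
  have hxX : x ∈ tubingDown T x := down_self (T := T) x
  have hXuniv : tubingDown T x ≠ (univ : Finset (Fin n)) := by
    intro h
    have huJ : (univ : Finset (Fin n)) ∈ J := univ_mem hJ x
    have huY : (univ : Finset (Fin n)) ≠ Y := fun he => hXY (h.trans he)
    have h2 : (univ : Finset (Fin n)) ∈ J.erase Y := mem_erase.2 ⟨huY, huJ⟩
    rw [← herase] at h2
    exact (mem_erase.1 h2).1 h.symm
  obtain ⟨P, hPT, hxP, hPX, hXsubP, hPmin⟩ := parent_spec hT x hXuniv
  obtain ⟨p, hdp⟩ := down_surj hT hPT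
  have hpP : p ∈ P := by rw [← hdp]; exact down_self (T := T) p
  have hpX : p ∉ tubingDown T x := by
    intro hmem
    exact hPX (Finset.Subset.antisymm (hdp ▸ down_min hT (down_mem hT x) hmem) hXsubP)
  have hZS : Y ∉ T.erase (tubingDown T x) := by
    rw [herase]
    exact notMem_erase _ _
  have hZX : Y ≠ tubingDown T x := fun h => hXY h.symm
  have hJ' : IsMaxTubing (pathGraph n) (insert Y (T.erase (tubingDown T x))) := hJeq ▸ hJ
  have hdy' : tubingDown (insert Y (T.erase (tubingDown T x))) y = Y := by
    rw [← hJeq]; exact hdy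
  rcases iv_side (down_iv hT x) hpX with hside | hside
  · -- left child case
    have hshape : tubingDown T x = P.filter (fun w => w < p) := by
      have hfT : P.filter (fun w => w < p) ∈ T := by
        refine filter_lt_mem hT hPT hpP ?_ ⟨x, mem_filter.2 ⟨hxP, hside x hxX⟩⟩
        have h := down_isTop hT p
        rw [hdp] at h
        exact h
      by_contra hne
      have := hPmin _ hfT (mem_filter.2 ⟨hxP, hside x hxX⟩) (fun h => hne h.symm)
      exact absurd (mem_filter.1 (this hpP)).2 (lt_irrefl p)
    rcases c_top_cases hT hPT hxP hdp hPX hPmin hZS hZX hJ' hdy' with h | h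
    · rw [h] at hdy'
      exact absurd hdy' (fun he => c_left_ne_x hT hPT hxP hdp hPX hZS hZX hJ' hshape he)
    · rw [h] at hdy'
      have hYeq : Y = P.filter (fun w => x < w) :=
        c_left_zp hT hPT hxP hdp hPX hZS hZX hJ' hshape hdy'
      rw [hJeq, hYeq, hshape]
      exact r_inv_subset hT hPT hdp hshape
  · -- right child case: contradiction with x < y
    have hshape : tubingDown T x = P.filter (fun w => p < w) := by
      have hfT : P.filter (fun w => p < w) ∈ T := by
        refine filter_gt_mem hT hPT hpP ?_ ⟨x, mem_filter.2 ⟨hxP, hside x hxX⟩⟩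
        have h := down_isTop hT p
        rw [hdp] at h
        exact h
      by_contra hne
      have := hPmin _ hfT (mem_filter.2 ⟨hxP, hside x hxX⟩) (fun h => hne h.symm)
      exact absurd (mem_filter.1 (this hpP)).2 (lt_irrefl p)
    rcases c_top_cases hT hPT hxP hdp hPX hPmin hZS hZX hJ' hdy' with h | h
    · rw [h] at hdy'
      exact absurd hdy' (fun he => c_right_ne_x hT hPT hxP hdp hPX hZS hZX hJ' hshape he)
    · exfalso
      rw [h] at hxy
      exact absurd (lt_trans hxy (hside x hxX)) (lt_irrefl x)

lemma mtub_inv_mono {T J : Finset (Finset (Fin n))} (h : MTubLE (pathGraph n) T J) :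
    invSet T ⊆ invSet J := by
  induction h with
  | refl => exact subset_rfl
  | tail _ hflip ih => exact ih.trans (flip_inv_mono hflip)

end MTaux
namespace MTaux

open Finset

variable {n : ℕ}

lemma tubing_eq_of_inv {T Yt : Finset (Finset (Fin n))} (hT : IsMaxTubing (pathGraph n) T)
    (hYt : IsMaxTubing (pathGraph n) Yt) (h1 : invSet T ⊆ invSet Yt)
    (h2 : invSet Yt ⊆ invSet T) : T = Yt := by
  have hco1 : coinvSet Yt ⊆ coinvSet T := coinv_anti hT hYt h1
  have hco2 : coinvSet T ⊆ coinvSet Yt := coinv_anti hYt hT h2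
  have htree : ∀ u v : Fin n, treeLE T u v ↔ treeLE Yt u v := by
    intro u v
    rcases lt_trichotomy u v with h | rfl | h
    · constructor
      · intro hh
        exact (hco2 (⟨h, hh⟩ : (u,v) ∈ coinvSet T)).2
      · intro hh
        exact (hco1 (⟨h, hh⟩ : (u,v) ∈ coinvSet Yt)).2
    · exact ⟨fun _ => treeLE_refl Yt u, fun _ => treeLE_refl T u⟩
    · constructor
      · intro hh
        exact (h1 (⟨h, hh⟩ : (v,u) ∈ invSet T)).2
      · intro hh
        exact (h2 (⟨h, hh⟩ : (v,u) ∈ invSet Yt)).2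
  have hdown : ∀ v : Fin n, tubingDown T v = tubingDown Yt v := by
    intro v
    ext w
    exact htree w v
  apply Finset.Subset.antisymm
  · intro B hB
    obtain ⟨t, ht⟩ := down_surj hT hB
    rw [← ht, hdown]
    exact down_mem hYt t
  · intro B hB
    obtain ⟨t, ht⟩ := down_surj hYt hB
    rw [← ht, ← hdown]
    exact down_mem hT t

lemma exists_edge {T Yt : Finset (Finset (Fin n))} (hT : IsMaxTubing (pathGraph n) T)
    (hYt : IsMaxTubing (pathGraph n) Yt) (hmono : invSet T ⊆ invSet Yt) :
    ∀ k : ℕ, ∀ a b : Fin n, (b : ℕ) - (a : ℕ) = k → a < b → treeLE Yt b a → ¬ treeLE T b a →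
    ∃ bb cc : Fin n, tubingDown T cc = (tubingDown T bb).filter (fun w => w < bb) ∧
      cc < bb ∧ ((cc, bb) : Fin n × Fin n) ∈ invSet Yt := by
  intro k
  induction k using Nat.strong_induction_on with
  | _ k ih =>
  intro a b hk hab hY hnT
  have hab' : (a : ℕ) < (b : ℕ) := hab
  rcases Classical.em (treeLE T a b) with hTab | hTab
  · have haB : a ∈ tubingDown T b := hTab
    have hLne : ((tubingDown T b).filter (fun w => w < b)).Nonempty :=
      ⟨a, mem_filter.2 ⟨haB, hab⟩⟩
    have hLT : (tubingDown T b).filter (fun w => w < b) ∈ T :=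
      filter_lt_mem hT (down_mem hT b) (down_self (T := T) b) (down_isTop hT b) hLne
    obtain ⟨c, hdc⟩ := down_surj hT hLT
    have hcL : c ∈ (tubingDown T b).filter (fun w => w < b) := by
      rw [← hdc]; exact down_self (T := T) c
    have hcb : c < b := (mem_filter.1 hcL).2
    have haL : a ∈ (tubingDown T b).filter (fun w => w < b) := mem_filter.2 ⟨haB, hab⟩
    have hac : treeLE T a c := by rw [treeLE, hdc]; exact haL
    rcases lt_trichotomy c a with hca | heq | hac'
    · have hinv : ((c, a) : Fin n × Fin n) ∈ invSet T := ⟨hca, hac⟩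
      have hY1 : treeLE Yt a c := (hmono hinv).2
      exact ⟨b, c, hdc, hcb, ⟨hcb, treeLE_trans hY hY1⟩⟩
    · rw [heq] at hdc hcb
      exact ⟨b, a, hdc, hcb, ⟨hcb, hY⟩⟩
    · have hYc : treeLE Yt c a := between_left hYt hY (le_of_lt hac') (le_of_lt hcb)
      have hnTc : ¬ treeLE T c a := fun h =>
        absurd (treeLE_antisymm hT hac h) (ne_of_lt hac')
      have hac'' : (a : ℕ) < (c : ℕ) := hac'
      have hcb'' : (c : ℕ) < (b : ℕ) := hcb
      exact ih ((c : ℕ) - (a : ℕ)) (by omega) a c rfl hac' hYc hnTc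
  · rcases Classical.em (treeLE T b a) with h | h
    · exact absurd h hnT
    · obtain ⟨t, hat, htb, hTat, hTbt⟩ := sandwich hT hab hTab h
      have hYt' : treeLE Yt t a := between_left hYt hY (le_of_lt hat) (le_of_lt htb)
      have hnT' : ¬ treeLE T t a := fun hh =>
        absurd (treeLE_antisymm hT hTat hh) (ne_of_lt hat)
      have h1 : (a : ℕ) < (t : ℕ) := hat
      have h2 : (t : ℕ) < (b : ℕ) := htb
      exact ih ((t : ℕ) - (a : ℕ)) (by omega) a t rfl hat hYt' hnT'

lemma mtub_of_inv_mono {Yt : Finset (Finset (Fin n))} (hYt : IsMaxTubing (pathGraph n) Yt) :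
    ∀ k : ℕ, ∀ T : Finset (Finset (Fin n)), IsMaxTubing (pathGraph n) T →
      invSet T ⊆ invSet Yt → (invSet Yt \ invSet T).ncard ≤ k →
      MTubLE (pathGraph n) T Yt := by
  intro k
  induction k with
  | zero =>
    intro T hT hmono hcard
    have hempty : invSet Yt \ invSet T = ∅ :=
      (Set.ncard_eq_zero (Set.toFinite _)).1 (Nat.le_zero.1 hcard)
    have h2 : invSet Yt ⊆ invSet T := by
      intro p hp
      by_contra hpT
      exact absurd (Set.mem_diff_of_mem hp hpT) (by rw [hempty]; exact Set.notMem_empty p)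
    rw [tubing_eq_of_inv hT hYt hmono h2]
    exact Relation.ReflTransGen.refl
  | succ k ihk =>
    intro T hT hmono hcard
    by_cases h2 : invSet Yt ⊆ invSet T
    · rw [tubing_eq_of_inv hT hYt hmono h2]
      exact Relation.ReflTransGen.refl
    · obtain ⟨p, hpY, hpT⟩ := Set.not_subset.1 h2
      obtain ⟨a, b⟩ := p
      have hab : a < b := hpY.1
      have hYba : treeLE Yt b a := hpY.2
      have hnT : ¬ treeLE T b a := fun h => hpT ⟨hab, h⟩
      obtain ⟨bb, cc, hdc, hccbb, hccY⟩ :=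
        exists_edge hT hYt hmono ((b : ℕ) - (a : ℕ)) a b rfl hab hYba hnT
      have hBmem : tubingDown T bb ∈ T := down_mem hT bb
      have hdb : tubingDown T bb = tubingDown T bb := rfl
      -- the flip
      have hflip := r_flip hT hBmem hdb hdc
      have hJmax := r_Jmax hT hBmem hdb hdc
      have hinvTJ := r_inv_subset hT hBmem hdb hdc
      have hinvJY : invSet (insert ((tubingDown T bb).filter (fun w => cc < w))
          (T.erase ((tubingDown T bb).filter (fun w => w < bb)))) ⊆ invSet Yt := by
        intro q hq
        rcases r_inv_sup hT hBmem hdb hdc q hq with hq' | ⟨hq1, hq2, hq3⟩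
        · exact hmono hq'
        · obtain ⟨u, w⟩ := q
          simp only at hq1 hq2 hq3
          have huw : u < w := hq.1
          refine ⟨huw, ?_⟩
          simp only
          rw [hq1]
          rcases eq_or_lt_of_le hq3 with heq | hlt
          · rw [← heq]
            exact hccY.2
          · have hwbb : treeLE T w bb := by rw [treeLE]; exact hq2
            have hinv : ((bb, w) : Fin n × Fin n) ∈ invSet T := ⟨hlt, hwbb⟩
            exact treeLE_trans ((hmono hinv).2) hccY.2
      have hnew := r_new_inv hT hBmem hdb hdc
      have hss : invSet Yt \ invSet (insert ((tubingDown T bb).filter (fun w => cc < w))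
          (T.erase ((tubingDown T bb).filter (fun w => w < bb)))) ⊂ invSet Yt \ invSet T := by
        constructor
        · intro q hq
          exact ⟨hq.1, fun hqT => hq.2 (hinvTJ hqT)⟩
        · intro hsub
          have hmem : ((cc, bb) : Fin n × Fin n) ∈ invSet Yt \ invSet T :=
            ⟨hccY, hnew.2⟩
          have := hsub hmem
          exact this.2 hnew.1
      have hlt := Set.ncard_lt_ncard hss (Set.toFinite _)
      exact Relation.ReflTransGen.head hflip
        (ihk _ hJmax hinvJY (by omega))

end MTaux
/-- Characterizations of the order on maximal tubings of the path graph. -/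
theorem mtub_path_order_tfae (n : ℕ) (X Y : Finset (Finset (Fin n)))
    (hX : IsMaxTubing (pathGraph n) X) (hY : IsMaxTubing (pathGraph n) Y) :
    List.TFAE [MTubLE (pathGraph n) X Y,
      invSet X ⊆ invSet Y,
      invSet X ⊆ invSet Y ∪ incSet Y,
      invSet X ∪ incSet X ⊆ invSet Y ∪ incSet Y,
      coinvSet Y ⊆ coinvSet X] := by
  tfae_have 1 → 2 := fun h => MTaux.mtub_inv_mono h
  tfae_have 2 → 1 := fun h => MTaux.mtub_of_inv_mono hY _ X hX h le_rfl
  tfae_have 2 → 3 := fun h => h.trans Set.subset_union_left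
  tfae_have 3 → 2 := fun h => MTaux.inv_of_inv_union_inc hX hY h
  tfae_have 2 → 4 := fun h => MTaux.union_inc_mono hX hY h
  tfae_have 4 → 3 := fun h => Set.subset_union_left.trans h
  tfae_have 2 → 5 := fun h => MTaux.coinv_anti hX hY h
  tfae_have 5 → 2 := fun h => MTaux.inv_mono_of_coinv hX hY h
  tfae_finish
end

section
/- For every maximal tubing J of the cycle C_n, Cut(J) is a maximal tubing of the path P_n. Moreover the map cut_J on tubes is injective, so |Cut(J)| = |J| = n. -/
open Finset

open Finset
section
variable {n : ℕ}

def TRel (G : SimpleGraph (Fin n)) (s : Finset (Fin n)) (a b : Fin n) : Prop :=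
  G.Adj a b ∧ a ∈ s ∧ b ∈ s

def TChain (G : SimpleGraph (Fin n)) (s : Finset (Fin n)) : Fin n → Fin n → Prop :=
  Relation.ReflTransGen (TRel G s)

lemma chain_symm {G : SimpleGraph (Fin n)} {s : Finset (Fin n)} {a b : Fin n}
    (h : TChain G s a b) : TChain G s b a := by
  induction h with
  | refl => exact Relation.ReflTransGen.refl
  | tail _ h2 ih => exact Relation.ReflTransGen.head ⟨h2.1.symm, h2.2.2, h2.2.1⟩ ih

lemma chain_mono {G : SimpleGraph (Fin n)} {s t : Finset (Fin n)} (hst : s ⊆ t) {a b : Fin n}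
    (h : TChain G s a b) : TChain G t a b := by
  induction h with
  | refl => exact Relation.ReflTransGen.refl
  | tail _ h2 ih => exact ih.tail ⟨h2.1, hst h2.2.1, hst h2.2.2⟩

lemma chain_reachable {G : SimpleGraph (Fin n)} {X : Finset (Fin n)} {u v : Fin n}
    (h : TChain G X u v) : ∀ (hu : u ∈ X) (hv : v ∈ X),
    (G.induce (X : Set (Fin n))).Reachable ⟨u, hu⟩ ⟨v, hv⟩ := by
  induction h with
  | refl => intro hu hv; rfl
  | tail _ h2 ih =>
    intro hu hv
    exact (ih hu h2.2.1).trans (SimpleGraph.Adj.reachable (by exact h2.1))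

lemma walk_chain {G : SimpleGraph (Fin n)} {X : Finset (Fin n)} :
    ∀ {a b : (X : Set (Fin n))}, (G.induce (X : Set (Fin n))).Walk a b →
      TChain G X a.1 b.1 := by
  intro a b w
  induction w with
  | nil => exact Relation.ReflTransGen.refl
  | cons h p ih =>
    exact Relation.ReflTransGen.head
      ⟨h, Finset.mem_coe.mp (Subtype.prop _), Finset.mem_coe.mp (Subtype.prop _)⟩ ih

lemma isTube_iff (G : SimpleGraph (Fin n)) (X : Finset (Fin n)) :
    IsTube G X ↔ X.Nonempty ∧ ∀ u ∈ X, ∀ v ∈ X, TChain G X u v := by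
  constructor
  · rintro ⟨hne, hconn⟩
    refine ⟨hne, fun u hu v hv => ?_⟩
    obtain ⟨w⟩ := hconn.preconnected ⟨u, hu⟩ ⟨v, hv⟩
    exact walk_chain w
  · rintro ⟨hne, hchain⟩
    refine ⟨hne, ?_⟩
    rw [SimpleGraph.connected_iff]
    refine ⟨fun a b => ?_, ⟨⟨hne.choose, hne.choose_spec⟩⟩⟩
    obtain ⟨u, hu⟩ := a
    obtain ⟨v, hv⟩ := b
    exact chain_reachable (hchain u (by exact_mod_cast hu) v (by exact_mod_cast hv))
      (by exact_mod_cast hu) (by exact_mod_cast hv)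
end
section
variable {n : ℕ} {G : SimpleGraph (Fin n)}

lemma tube_union_of_link {X Y : Finset (Fin n)} (hX : IsTube G X) (hY : IsTube G Y)
    (h : ∃ a ∈ X, ∃ b ∈ Y, a = b ∨ G.Adj a b) : IsTube G (X ∪ Y) := by
  rw [isTube_iff] at hX hY ⊢
  obtain ⟨a, ha, b, hb, hab⟩ := h
  refine ⟨⟨a, Finset.mem_union_left _ ha⟩, fun u hu v hv => ?_⟩
  have key : ∀ w ∈ X ∪ Y, TChain G (X ∪ Y) w b := by
    intro w hw
    rcases Finset.mem_union.mp hw with hw' | hw'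
    · have h1 : TChain G (X ∪ Y) w a :=
        chain_mono Finset.subset_union_left (hX.2 w hw' a ha)
      have h2 : TChain G (X ∪ Y) a b := by
        rcases hab with rfl | hadj
        · exact Relation.ReflTransGen.refl
        · exact Relation.ReflTransGen.single
            ⟨hadj, Finset.mem_union_left _ ha, Finset.mem_union_right _ hb⟩
      exact h1.trans h2
    · exact chain_mono Finset.subset_union_right (hY.2 w hw' b hb)
  exact (key u hu).trans (chain_symm (key v hv))

lemma no_link_of_not_tube {X Y : Finset (Fin n)} (hX : IsTube G X) (hY : IsTube G Y)
    (h : ¬ IsTube G (X ∪ Y)) : ∀ a ∈ X, ∀ b ∈ Y, a ≠ b ∧ ¬ G.Adj a b := by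
  intro a ha b hb
  constructor
  · rintro rfl; exact h (tube_union_of_link hX hY ⟨a, ha, a, hb, Or.inl rfl⟩)
  · intro hadj; exact h (tube_union_of_link hX hY ⟨a, ha, b, hb, Or.inr hadj⟩)

lemma nested_of_compat_meet {X Y : Finset (Fin n)} (hX : IsTube G X) (hY : IsTube G Y)
    (hc : TubeCompatible G X Y) (hm : ∃ p, p ∈ X ∧ p ∈ Y) : X ⊆ Y ∨ Y ⊆ X := by
  rcases hc with h | h | h
  · exact Or.inl h
  · exact Or.inr h
  · obtain ⟨p, hp, hp'⟩ := hm
    exact absurd (tube_union_of_link hX hY ⟨p, hp, p, hp', Or.inl rfl⟩) h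

lemma not_tube_of_separated {A Z : Finset (Fin n)} (hA : A.Nonempty) (hZ : Z.Nonempty)
    (hdisj : ∀ z ∈ Z, z ∉ A) (hadj : ∀ a ∈ A, ∀ z ∈ Z, ¬ G.Adj a z) :
    ¬ IsTube G (A ∪ Z) := by
  rw [isTube_iff]
  rintro ⟨-, hchain⟩
  obtain ⟨a, ha⟩ := hA
  obtain ⟨z, hz⟩ := hZ
  have hch := hchain a (Finset.mem_union_left _ ha) z (Finset.mem_union_right _ hz)
  have stay : ∀ c, TChain G (A ∪ Z) a c → c ∈ A := by
    intro c hc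
    induction hc with
    | refl => exact ha
    | tail _ h2 ih =>
      rcases Finset.mem_union.mp h2.2.2 with h' | h'
      · exact h'
      · exact absurd h2.1 (hadj _ ih _ h')
  exact hdisj z hz (stay z hch)

lemma compat_symm {X Y : Finset (Fin n)} (h : TubeCompatible G X Y) :
    TubeCompatible G Y X := by
  rcases h with h | h | h
  · exact Or.inr (Or.inl h)
  · exact Or.inl h
  · exact Or.inr (Or.inr (by rwa [Finset.union_comm]))

lemma mem_tubingDown_self (T : Finset (Finset (Fin n))) (x : Fin n) :
    x ∈ tubingDown T x := by
  simp [tubingDown]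

lemma tubingDown_subset {T : Finset (Finset (Fin n))} {X : Finset (Fin n)} {x : Fin n}
    (hX : X ∈ T) (hx : x ∈ X) : tubingDown T x ⊆ X := by
  intro y hy
  rw [tubingDown, Finset.mem_filter] at hy
  exact hy.2 X hX hx

lemma tubingDown_mem {T : Finset (Finset (Fin n))} (hT : IsTubing G T)
    {X : Finset (Fin n)} {x : Fin n} (hX : X ∈ T) (hx : x ∈ X) :
    tubingDown T x ∈ T := by
  classical
  set C := T.filter (fun Y => x ∈ Y) with hC
  have hCne : C.Nonempty := ⟨X, by simp [hC, hX, hx]⟩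
  obtain ⟨X₀, hX₀, hmin⟩ := C.exists_min_image Finset.card hCne
  have hX₀T : X₀ ∈ T := (Finset.mem_filter.mp hX₀).1
  have hxX₀ : x ∈ X₀ := (Finset.mem_filter.mp hX₀).2
  have hsub : ∀ Y ∈ C, X₀ ⊆ Y := by
    intro Y hY
    have hYT : Y ∈ T := (Finset.mem_filter.mp hY).1
    have hxY : x ∈ Y := (Finset.mem_filter.mp hY).2
    rcases nested_of_compat_meet (hT.1 _ hX₀T) (hT.1 _ hYT)
      (hT.2 _ hX₀T _ hYT) ⟨x, hxX₀, hxY⟩ with h | h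
    · exact h
    · exact (Finset.eq_of_subset_of_card_le h (hmin Y hY)) ▸ Finset.Subset.refl _
  have : tubingDown T x = X₀ := by
    apply Finset.Subset.antisymm
    · exact tubingDown_subset hX₀T hxX₀
    · intro y hy
      rw [tubingDown, Finset.mem_filter]
      exact ⟨Finset.mem_univ _, fun Z hZ hxZ => hsub Z (by simp [hC, hZ, hxZ]) hy⟩
  rwa [this]

end
section
variable {n : ℕ} {G : SimpleGraph (Fin n)}

lemma chain_exit {X S : Finset (Fin n)} {a c : Fin n} (h : TChain G X a c)
    (ha : a ∈ S) (hc : c ∉ S) : ∃ p ∈ S, ∃ q ∈ X, q ∉ S ∧ G.Adj p q := by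
  induction h with
  | refl => exact absurd ha hc
  | tail h1 h2 ih =>
    rename_i b c'
    by_cases hb : b ∈ S
    · exact ⟨b, hb, c', h2.2.2, hc, h2.1⟩
    · exact ih hb

lemma top_exists {T : Finset (Finset (Fin n))} (hT : IsTubing G T)
    {X : Finset (Fin n)} (hX : X ∈ T) : ∃ x ∈ X, tubingDown T x = X := by
  classical
  have hXt := hT.1 _ hX
  obtain ⟨x₀, hx₀X, hmax⟩ := X.exists_max_image (fun x => (tubingDown T x).card)
    ((isTube_iff G X).mp hXt).1
  refine ⟨x₀, hx₀X, ?_⟩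
  set S := tubingDown T x₀ with hS
  have hSsub : S ⊆ X := tubingDown_subset hX hx₀X
  have hST : S ∈ T := tubingDown_mem hT hX hx₀X
  by_contra hne
  have hproper : ∃ v ∈ X, v ∉ S := by
    by_contra hcon
    push_neg at hcon
    exact hne (Finset.Subset.antisymm hSsub hcon)
  obtain ⟨v₀, hv₀X, hv₀S⟩ := hproper
  obtain ⟨p, hpS, q, hqX, hqS, hpq⟩ :=
    chain_exit (((isTube_iff G X).mp hXt).2 x₀ hx₀X v₀ hv₀X)
      (mem_tubingDown_self T x₀) hv₀S
  set D := tubingDown T q with hD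
  have hDT : D ∈ T := tubingDown_mem hT hX hqX
  have hqD : q ∈ D := mem_tubingDown_self T q
  rcases hT.2 _ hST _ hDT with h | h | h
  · have : S = D := Finset.eq_of_subset_of_card_le h (hmax q hqX)
    exact hqS (by rw [← hS, this, hD]; exact hqD)
  · exact hqS (h hqD)
  · exact h (tube_union_of_link (hT.1 _ hST) (hT.1 _ hDT) ⟨p, hpS, q, hqD, Or.inr hpq⟩)

lemma tubing_card_le {T : Finset (Finset (Fin n))} (hT : IsTubing G T) (m : Fin n) :
    T.card ≤ n := by
  classical
  have := Finset.card_le_card_of_injOn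
    (fun X => if h : ∃ x, x ∈ X ∧ tubingDown T x = X then h.choose else m)
    (fun X _ => Finset.mem_univ _) (s := T) (t := Finset.univ) ?_
  · simpa using this
  · intro X₁ h₁ X₂ h₂ heq
    have e₁ : ∃ x, x ∈ X₁ ∧ tubingDown T x = X₁ := by
      obtain ⟨x, hx, hx'⟩ := top_exists hT h₁; exact ⟨x, hx, hx'⟩
    have e₂ : ∃ x, x ∈ X₂ ∧ tubingDown T x = X₂ := by
      obtain ⟨x, hx, hx'⟩ := top_exists hT h₂; exact ⟨x, hx, hx'⟩
    simp only [dif_pos e₁, dif_pos e₂] at heq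
    rw [← e₁.choose_spec.2, ← e₂.choose_spec.2, heq]

lemma univ_mem_max (hJ : IsMaxTubing G J) (ht : IsTube G (Finset.univ : Finset (Fin n))) :
    (Finset.univ : Finset (Fin n)) ∈ J := by
  have htub : IsTubing G (insert Finset.univ J) := by
    constructor
    · intro X hX
      rcases Finset.mem_insert.mp hX with rfl | hX
      · exact ht
      · exact hJ.1.1 _ hX
    · intro X hX Y hY
      rcases Finset.mem_insert.mp hX with rfl | hX
      · exact Or.inr (Or.inl (Finset.subset_univ _))
      · rcases Finset.mem_insert.mp hY with rfl | hY
        · exact Or.inl (Finset.subset_univ _)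
        · exact hJ.1.2 _ hX _ hY
  have := hJ.2 _ htub (Finset.subset_insert _ _)
  rw [← this]
  exact Finset.mem_insert_self _ _

end
section
variable {n : ℕ} {G : SimpleGraph (Fin n)}

lemma chain_restrict {s : Finset (Fin n)} {x v : Fin n} (hx : x ∈ s)
    (h : TChain G s x v) :
    letI := Classical.decPred (TChain G s x)
    TChain G (s.filter (TChain G s x)) x v := by
  classical
  induction h with
  | refl => exact Relation.ReflTransGen.refl
  | tail h1 h2 ih =>
    refine ih.tail ⟨h2.1, ?_, ?_⟩
    · simp only [Finset.mem_filter]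
      exact ⟨h2.2.1, h1⟩
    · simp only [Finset.mem_filter]
      exact ⟨h2.2.2, h1.tail h2⟩

lemma tubingTop_unique {J : Finset (Finset (Fin n))} (hJ : IsMaxTubing G J)
    (huniv : (Finset.univ : Finset (Fin n)) ∈ J) {x y : Fin n}
    (h : tubingDown J x = tubingDown J y) : x = y := by
  classical
  by_contra hxy
  set X := tubingDown J x with hXdef
  have hXJ : X ∈ J := tubingDown_mem hJ.1 huniv (Finset.mem_univ x)
  have hxX : x ∈ X := mem_tubingDown_self J x
  have hyX : y ∈ X := by rw [h]; exact mem_tubingDown_self J y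
  have hXtube : IsTube G X := hJ.1.1 _ hXJ
  -- minimality
  have hminx : ∀ Z ∈ J, x ∈ Z → X ⊆ Z := fun Z hZ hxZ => tubingDown_subset hZ hxZ
  have hminy : ∀ Z ∈ J, y ∈ Z → X ⊆ Z := fun Z hZ hyZ => by
    rw [h]; exact tubingDown_subset hZ hyZ
  set E := X.erase y with hEdef
  have hxE : x ∈ E := Finset.mem_erase.mpr ⟨hxy, hxX⟩
  have hEX : E ⊆ X := Finset.erase_subset _ _
  set A := E.filter (TChain G E x) with hAdef
  have hAE : A ⊆ E := Finset.filter_subset _ _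
  have hxA : x ∈ A := by
    rw [hAdef, Finset.mem_filter]; exact ⟨hxE, Relation.ReflTransGen.refl⟩
  have hyA : y ∉ A := fun hy => (Finset.mem_erase.mp (hAE hy)).1 rfl
  have hchainA : ∀ z ∈ A, TChain G A x z := by
    intro z hz
    rw [hAdef, Finset.mem_filter] at hz
    exact chain_restrict hxE hz.2
  have hAtube : IsTube G A := by
    rw [isTube_iff]
    exact ⟨⟨x, hxA⟩, fun u hu v hv =>
      (chain_symm (hchainA u hu)).trans (hchainA v hv)⟩
  -- absorption: anything in E chain-connected to A is in A
  have habsorb : ∀ a ∈ A, ∀ z ∈ E, G.Adj a z → z ∈ A := by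
    intro a ha z hz hadj
    rw [hAdef, Finset.mem_filter] at ha ⊢
    exact ⟨hz, ha.2.tail ⟨hadj, ha.1, hz⟩⟩
  -- compatibility of A with every member of J
  have hcompat : ∀ Z ∈ J, TubeCompatible G A Z := by
    intro Z hZ
    have hZtube := hJ.1.1 _ hZ
    by_cases hXZ : X ⊆ Z
    · exact Or.inl (fun a ha => hXZ (hEX (hAE ha)))
    rcases hJ.1.2 _ hXJ _ hZ with h' | h' | h'
    · exact absurd h' hXZ
    · -- Z ⊆ X, Z ≠ X
      have hyZ : y ∉ Z := fun hy => hXZ (hminy Z hZ hy)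
      have hZE : Z ⊆ E := fun z hz => Finset.mem_erase.mpr ⟨fun he => hyZ (he ▸ hz), h' hz⟩
      by_cases hmeet : ∃ p, p ∈ Z ∧ p ∈ A
      · -- Z ⊆ A
        obtain ⟨p, hpZ, hpA⟩ := hmeet
        refine Or.inr (Or.inl (fun q hq => ?_))
        have hchZ := ((isTube_iff G Z).mp hZtube).2 p hpZ q hq
        have : TChain G E p q := chain_mono hZE hchZ
        rw [hAdef, Finset.mem_filter] at hpA ⊢
        exact ⟨hZE hq, hpA.2.trans this⟩
      · push_neg at hmeet
        refine Or.inr (Or.inr (not_tube_of_separated ⟨x, hxA⟩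
          ((isTube_iff G Z).mp hZtube).1 hmeet (fun a ha z hz hadj => ?_)))
        exact hmeet z hz (habsorb a ha z (hZE hz) hadj)
    · -- X and Z have non-tube union: disjoint
      have hdisj : ∀ p, p ∈ X → p ∉ Z := by
        intro p hp hp'
        rcases nested_of_compat_meet hXtube hZtube (Or.inr (Or.inr h')) ⟨p, hp, hp'⟩
          with h'' | h''
        · exact hXZ h''
        · exact h' (by
            rw [Finset.union_eq_left.mpr h'']
            exact hXtube)
      refine Or.inr (Or.inr (fun htube => h' ?_))
      have : X ∪ (A ∪ Z) = X ∪ Z := by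
        apply Finset.Subset.antisymm
        · intro w hw
          rcases Finset.mem_union.mp hw with hw | hw
          · exact Finset.mem_union_left _ hw
          · rcases Finset.mem_union.mp hw with hw | hw
            · exact Finset.mem_union_left _ (hEX (hAE hw))
            · exact Finset.mem_union_right _ hw
        · intro w hw
          rcases Finset.mem_union.mp hw with hw | hw
          · exact Finset.mem_union_left _ hw
          · exact Finset.mem_union_right _ (Finset.mem_union_right _ hw)
      rw [← this]
      exact tube_union_of_link hXtube htube
        ⟨x, hxX, x, Finset.mem_union_left _ hxA, Or.inl rfl⟩
  -- A is not in J
  have hAnJ : A ∉ J := by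
    intro hA
    have := hminx A hA hxA
    exact hyA (this hyX)
  -- contradiction with maximality
  have htub : IsTubing G (insert A J) := by
    constructor
    · intro Z hZ
      rcases Finset.mem_insert.mp hZ with rfl | hZ
      · exact hAtube
      · exact hJ.1.1 _ hZ
    · intro Z₁ h₁ Z₂ h₂
      rcases Finset.mem_insert.mp h₁ with rfl | h₁
      · rcases Finset.mem_insert.mp h₂ with rfl | h₂
        · exact Or.inl (Finset.Subset.refl _)
        · exact hcompat _ h₂
      · rcases Finset.mem_insert.mp h₂ with rfl | h₂
        · exact compat_symm (hcompat _ h₁)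
        · exact hJ.1.2 _ h₁ _ h₂
  have := hJ.2 _ htub (Finset.subset_insert _ _)
  exact hAnJ (this ▸ Finset.mem_insert_self A J)

end
section
variable {n : ℕ}

def cpos (m z : Fin n) : ℕ :=
  if (m : ℕ) < (z : ℕ) then (z : ℕ) - (m : ℕ) - 1 else (z : ℕ) + (n - 1) - (m : ℕ)

lemma path_adj_iff {a b : Fin n} :
    (pathGraph n).Adj a b ↔ a ≠ b ∧ ((a:ℕ)+1=(b:ℕ) ∨ (b:ℕ)+1=(a:ℕ)) := by
  simp [pathGraph, SimpleGraph.fromRel_adj]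

lemma cyc_adj_iff {a b : Fin n} :
    (cycleGraph n).Adj a b ↔ a ≠ b ∧
      (((a:ℕ)+1=(b:ℕ) ∨ ((a:ℕ)=0 ∧ (b:ℕ)=n-1)) ∨
       ((b:ℕ)+1=(a:ℕ) ∨ ((b:ℕ)=0 ∧ (a:ℕ)=n-1))) := by
  simp [cycleGraph, SimpleGraph.fromRel_adj]

lemma path_adj_cyc {a b : Fin n} (h : (pathGraph n).Adj a b) : (cycleGraph n).Adj a b := by
  rw [path_adj_iff] at h; rw [cyc_adj_iff]; tauto

lemma succ_adj_path {a b : Fin n} (h : (a:ℕ)+1 = (b:ℕ)) : (pathGraph n).Adj a b :=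
  path_adj_iff.mpr ⟨fun e => by rw [e] at h; omega, Or.inl h⟩

lemma chain_of_convex_le {S : Finset (Fin n)}
    (hconv : ∀ u ∈ S, ∀ v ∈ S, ∀ w : Fin n, (u:ℕ) ≤ (w:ℕ) → (w:ℕ) ≤ (v:ℕ) → w ∈ S)
    {u v : Fin n} (hu : u ∈ S) (hv : v ∈ S) (huv : (u:ℕ) ≤ (v:ℕ)) :
    TChain (pathGraph n) S u v := by
  obtain ⟨k, hk⟩ : ∃ k, (v:ℕ) = (u:ℕ) + k := ⟨(v:ℕ) - (u:ℕ), by omega⟩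
  induction k generalizing u with
  | zero =>
    have : u = v := Fin.ext (by omega)
    subst this; exact Relation.ReflTransGen.refl
  | succ k ih =>
    have hvlt := v.isLt
    set u' : Fin n := ⟨(u:ℕ)+1, by omega⟩ with hu'def
    have hu' : u' ∈ S := hconv u hu v hv u' (by simp [hu'def]) (by simp [hu'def]; omega)
    refine Relation.ReflTransGen.head ⟨succ_adj_path (by simp [hu'def]), hu, hu'⟩ ?_
    exact ih hu' (by simp [hu'def]; omega) (by simp [hu'def]; omega)

lemma chain_of_convex {S : Finset (Fin n)}
    (hconv : ∀ u ∈ S, ∀ v ∈ S, ∀ w : Fin n, (u:ℕ) ≤ (w:ℕ) → (w:ℕ) ≤ (v:ℕ) → w ∈ S)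
    {u v : Fin n} (hu : u ∈ S) (hv : v ∈ S) : TChain (pathGraph n) S u v := by
  rcases le_total (u:ℕ) (v:ℕ) with h | h
  · exact chain_of_convex_le hconv hu hv h
  · exact chain_symm (chain_of_convex_le hconv hv hu h)

lemma chain_iv {G : SimpleGraph (Fin n)} {S : Finset (Fin n)} (f : Fin n → ℕ)
    (hstep : ∀ a ∈ S, ∀ b ∈ S, G.Adj a b → f b = f a + 1 ∨ f a = f b + 1)
    {u v : Fin n} (h : TChain G S u v) (hu : u ∈ S) :
    ∀ k, ((f u ≤ k ∧ k ≤ f v) ∨ (f v ≤ k ∧ k ≤ f u)) → ∃ z ∈ S, f z = k := by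
  induction h with
  | refl => intro k hk; exact ⟨u, hu, by omega⟩
  | tail h1 h2 ih =>
    rename_i b c
    intro k hk
    have hbS := h2.2.1
    have hcS := h2.2.2
    have hs := hstep b hbS c hcS h2.1
    by_cases hmid : (f u ≤ k ∧ k ≤ f b) ∨ (f b ≤ k ∧ k ≤ f u)
    · exact ih k hmid
    · push_neg at hmid
      exact ⟨c, hcS, by omega⟩

lemma cpos_step {m a b : Fin n} (ha : a ≠ m) (hb : b ≠ m)
    (h : (cycleGraph n).Adj a b) : cpos m b = cpos m a + 1 ∨ cpos m a = cpos m b + 1 := by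
  rw [cyc_adj_iff] at h
  have h1 := a.isLt
  have h2 := b.isLt
  have h3 := m.isLt
  have ha' : (a:ℕ) ≠ (m:ℕ) := fun e => ha (Fin.ext e)
  have hb' : (b:ℕ) ≠ (m:ℕ) := fun e => hb (Fin.ext e)
  have hne : (a:ℕ) ≠ (b:ℕ) := fun e => h.1 (Fin.ext e)
  obtain ⟨-, hc⟩ := h
  unfold cpos
  split_ifs <;> omega

lemma cpos_inj {m a b : Fin n} (ha : a ≠ m) (hb : b ≠ m)
    (h : cpos m a = cpos m b) : a = b := by
  have h1 := a.isLt
  have h2 := b.isLt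
  have h3 := m.isLt
  have ha' : (a:ℕ) ≠ (m:ℕ) := fun e => ha (Fin.ext e)
  have hb' : (b:ℕ) ≠ (m:ℕ) := fun e => hb (Fin.ext e)
  refine Fin.ext ?_
  unfold cpos at h
  split_ifs at h <;> omega

lemma cyc_tube_convex {m : Fin n} {S : Finset (Fin n)} (hS : IsTube (cycleGraph n) S)
    (hm : m ∉ S) {u v w : Fin n} (hu : u ∈ S) (hv : v ∈ S) (hw : w ≠ m)
    (h1 : cpos m u ≤ cpos m w) (h2 : cpos m w ≤ cpos m v) : w ∈ S := by
  obtain ⟨z, hz, hze⟩ := chain_iv (cpos m)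
    (fun a haS b hbS hadj =>
      cpos_step (fun e => hm (by rw [← e]; exact haS)) (fun e => hm (by rw [← e]; exact hbS)) hadj)
    (((isTube_iff _ _).mp hS).2 u hu v hv) hu (cpos m w) (Or.inl ⟨h1, h2⟩)
  rwa [cpos_inj (fun e => hm (by rw [← e]; exact hz)) hw hze] at hz

lemma path_tube_convex {S : Finset (Fin n)} (hS : IsTube (pathGraph n) S)
    {u v w : Fin n} (hu : u ∈ S) (hv : v ∈ S)
    (h1 : (u:ℕ) ≤ (w:ℕ)) (h2 : (w:ℕ) ≤ (v:ℕ)) : w ∈ S := by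
  obtain ⟨z, hz, hze⟩ := chain_iv (fun z => (z:ℕ))
    (fun a _ b _ hadj => by rw [path_adj_iff] at hadj; omega)
    (((isTube_iff _ _).mp hS).2 u hu v hv) hu (w:ℕ) (Or.inl ⟨h1, h2⟩)
  rwa [show z = w from Fin.ext hze] at hz

lemma crossing_aux {P Q : Finset (Fin n)} (hdisj : ∀ z ∈ P, z ∉ Q)
    (hconv : ∀ u ∈ P ∪ Q, ∀ v ∈ P ∪ Q, ∀ w : Fin n,
      (u:ℕ) ≤ (w:ℕ) → (w:ℕ) ≤ (v:ℕ) → w ∈ P ∪ Q)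
    {p q : Fin n} (hp : p ∈ P) (hq : q ∈ Q) (hpq : (p:ℕ) ≤ (q:ℕ)) :
    ∃ c d : Fin n, (c:ℕ)+1=(d:ℕ) ∧ ((c ∈ P ∧ d ∈ Q) ∨ (c ∈ Q ∧ d ∈ P)) := by
  obtain ⟨k, hk⟩ : ∃ k, (q:ℕ) = (p:ℕ) + k := ⟨(q:ℕ) - (p:ℕ), by omega⟩
  induction k generalizing p with
  | zero =>
    have hqp : q = p := Fin.ext (by omega)
    exact absurd hq (by rw [hqp]; exact hdisj p hp)
  | succ k ih =>
    have hqlt := q.isLt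
    set p' : Fin n := ⟨(p:ℕ)+1, by omega⟩ with hp'def
    have hp' : p' ∈ P ∪ Q := hconv p (Finset.mem_union_left _ hp) q
      (Finset.mem_union_right _ hq) p' (by simp [hp'def]) (by simp [hp'def]; omega)
    rcases Finset.mem_union.mp hp' with h' | h'
    · exact ih h' (by simp [hp'def]; omega) (by simp [hp'def]; omega)
    · exact ⟨p, p', by simp [hp'def], Or.inl ⟨hp, h'⟩⟩
end
section
variable {n : ℕ}

lemma chain_path_cyc {S : Finset (Fin n)} {u v : Fin n}
    (h : TChain (pathGraph n) S u v) : TChain (cycleGraph n) S u v := by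
  induction h with
  | refl => exact Relation.ReflTransGen.refl
  | tail _ h2 ih => exact ih.tail ⟨path_adj_cyc h2.1, h2.2.1, h2.2.2⟩

lemma univ_tube_path (hn : 0 < n) : IsTube (pathGraph n) (Finset.univ : Finset (Fin n)) := by
  rw [isTube_iff]
  refine ⟨⟨⟨0, hn⟩, Finset.mem_univ _⟩, fun u _ v _ => ?_⟩
  exact chain_of_convex (fun _ _ _ _ w _ _ => Finset.mem_univ w)
    (Finset.mem_univ u) (Finset.mem_univ v)

lemma univ_tube_cyc (hn : 0 < n) : IsTube (cycleGraph n) (Finset.univ : Finset (Fin n)) := by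
  obtain ⟨hne, hch⟩ := (isTube_iff _ _).mp (univ_tube_path hn)
  exact (isTube_iff _ _).mpr ⟨hne, fun u hu v hv => chain_path_cyc (hch u hu v hv)⟩

lemma cpos_mono_lt {m u w : Fin n} (hu : u < m) (hw : w < m) (h : (u:ℕ) ≤ (w:ℕ)) :
    cpos m u ≤ cpos m w := by
  rw [Fin.lt_def] at hu hw
  have := m.isLt
  unfold cpos
  split_ifs <;> omega

lemma cpos_mono_gt {m u w : Fin n} (hu : m < u) (hw : m < w) (h : (u:ℕ) ≤ (w:ℕ)) :
    cpos m u ≤ cpos m w := by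
  rw [Fin.lt_def] at hu hw
  have := m.isLt
  unfold cpos
  split_ifs <;> omega

end

theorem cut_is_maxTubing' (n : ℕ) (J : Finset (Finset (Fin n))) (m : Fin n)
    (hJ : IsMaxTubing (cycleGraph n) J) (hm : tubingDown J m = Finset.univ) :
    IsMaxTubing (pathGraph n) (CutTubing J m) ∧
    (∀ x y : Fin n, cutTube J m x = cutTube J m y → tubingDown J x = tubingDown J y) ∧
    (CutTubing J m).card = n ∧ J.card = n := by
  classical
  have hn : 0 < n := m.pos
  have huniv : (Finset.univ : Finset (Fin n)) ∈ J := univ_mem_max hJ (univ_tube_cyc hn)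
  have htdJ : ∀ x : Fin n, tubingDown J x ∈ J :=
    fun x => tubingDown_mem hJ.1 huniv (Finset.mem_univ x)
  have htd_tube : ∀ x : Fin n, IsTube (cycleGraph n) (tubingDown J x) :=
    fun x => hJ.1.1 _ (htdJ x)
  have htd_inj : Function.Injective (tubingDown J) :=
    fun x y h => tubingTop_unique hJ huniv h
  have hm_only : ∀ X ∈ J, m ∈ X → X = Finset.univ := by
    intro X hX hmX
    have : (Finset.univ : Finset (Fin n)) ⊆ X := by
      rw [← hm]; exact tubingDown_subset hX hmX
    exact Finset.univ_subset_iff.mp this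
  have hmnot : ∀ x : Fin n, x ≠ m → m ∉ tubingDown J x := by
    intro x hx hmem
    exact hx (htd_inj ((hm_only _ (htdJ x) hmem).trans hm.symm))
  -- cut basics
  have hcut_self : ∀ x : Fin n, x ∈ cutTube J m x := by
    intro x
    rw [cutTube]
    split_ifs with h1 h2
    · exact mem_tubingDown_self J x
    · exact Finset.mem_filter.mpr ⟨mem_tubingDown_self J x, h2⟩
    · exact Finset.mem_filter.mpr ⟨mem_tubingDown_self J x,
        (not_lt.mp h2).lt_of_ne' h1⟩
  have hcut_sub : ∀ x : Fin n, cutTube J m x ⊆ tubingDown J x := by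
    intro x
    rw [cutTube]
    split_ifs
    · exact Finset.Subset.refl _
    · exact Finset.filter_subset _ _
    · exact Finset.filter_subset _ _
  have hcut_m : cutTube J m m = Finset.univ := by rw [cutTube, if_pos rfl, hm]
  have hcut_lt : ∀ x : Fin n, x < m →
      cutTube J m x = (tubingDown J x).filter (fun y => y < m) := by
    intro x h; rw [cutTube, if_neg (ne_of_lt h), if_pos h]
  have hcut_gt : ∀ x : Fin n, m < x →
      cutTube J m x = (tubingDown J x).filter (fun y => m < y) := by
    intro x h; rw [cutTube, if_neg (ne_of_gt h), if_neg (asymm h)]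
  have hm_notin_cut : ∀ x : Fin n, x ≠ m → m ∉ cutTube J m x := by
    intro x hx hmem
    rcases lt_or_gt_of_ne hx with h | h
    · rw [hcut_lt x h] at hmem
      exact lt_irrefl m (Finset.mem_filter.mp hmem).2
    · rw [hcut_gt x h] at hmem
      exact lt_irrefl m (Finset.mem_filter.mp hmem).2
  -- the second conjunct
  have conj2 : ∀ x y : Fin n, cutTube J m x = cutTube J m y →
      tubingDown J x = tubingDown J y := by
    intro x y heq
    by_cases hx : x = m
    · by_cases hy : y = m
      · rw [hx, hy]
      · exfalso
        apply hm_notin_cut y hy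
        rw [← heq, hx, hcut_m]
        exact Finset.mem_univ m
    · by_cases hy : y = m
      · exfalso
        apply hm_notin_cut x hx
        rw [heq, hy, hcut_m]
        exact Finset.mem_univ m
      · -- both proper; first rule out opposite sides
        have hxy : x ∈ cutTube J m y := by rw [← heq]; exact hcut_self x
        have hyx : y ∈ cutTube J m x := by rw [heq]; exact hcut_self y
        have h1 : tubingDown J x ⊆ tubingDown J y :=
          tubingDown_subset (htdJ y) (hcut_sub y hxy)
        have h2 : tubingDown J y ⊆ tubingDown J x :=
          tubingDown_subset (htdJ x) (hcut_sub x hyx)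
        exact Finset.Subset.antisymm h1 h2
  have hcut_inj : Function.Injective (cutTube J m) :=
    fun x y h => htd_inj (conj2 x y h)
  -- each cut is a path tube
  have hcut_tube : ∀ x : Fin n, IsTube (pathGraph n) (cutTube J m x) := by
    intro x
    by_cases hx : x = m
    · rw [hx, hcut_m]; exact univ_tube_path hn
    rcases lt_or_gt_of_ne hx with h | h
    · rw [hcut_lt x h]
      rw [isTube_iff]
      refine ⟨⟨x, by rw [← hcut_lt x h]; exact hcut_self x⟩, fun u hu v hv => ?_⟩
      refine chain_of_convex (fun a ha b hb w hw1 hw2 => ?_) hu hv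
      obtain ⟨haT, ham⟩ := Finset.mem_filter.mp ha
      obtain ⟨hbT, hbm⟩ := Finset.mem_filter.mp hb
      have hwm : w < m := by
        rw [Fin.lt_def] at hbm ⊢; omega
      refine Finset.mem_filter.mpr ⟨?_, hwm⟩
      exact cyc_tube_convex (htd_tube x) (hmnot x hx) haT hbT (ne_of_lt hwm)
        (cpos_mono_lt ham hwm hw1) (cpos_mono_lt hwm hbm hw2)
    · rw [hcut_gt x h]
      rw [isTube_iff]
      refine ⟨⟨x, by rw [← hcut_gt x h]; exact hcut_self x⟩, fun u hu v hv => ?_⟩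
      refine chain_of_convex (fun a ha b hb w hw1 hw2 => ?_) hu hv
      obtain ⟨haT, ham⟩ := Finset.mem_filter.mp ha
      obtain ⟨hbT, hbm⟩ := Finset.mem_filter.mp hb
      have hwm : m < w := by
        rw [Fin.lt_def] at ham ⊢; omega
      refine Finset.mem_filter.mpr ⟨?_, hwm⟩
      exact cyc_tube_convex (htd_tube x) (hmnot x hx) haT hbT (ne_of_gt hwm)
        (cpos_mono_gt ham hwm hw1) (cpos_mono_gt hwm hbm hw2)
  -- compatibility of cuts on the same side
  have same_side : ∀ (x y : Fin n) (p : Fin n → Prop) (_ : DecidablePred p),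
      cutTube J m x = (tubingDown J x).filter p →
      cutTube J m y = (tubingDown J y).filter p →
      TubeCompatible (pathGraph n) (cutTube J m x) (cutTube J m y) := by
    intro x y p hp hxe hye
    rcases hJ.1.2 _ (htdJ x) _ (htdJ y) with h | h | h
    · refine Or.inl ?_
      rw [hxe, hye]
      exact Finset.filter_subset_filter p h
    · refine Or.inr (Or.inl ?_)
      rw [hxe, hye]
      exact Finset.filter_subset_filter p h
    · have hnolink := no_link_of_not_tube (htd_tube x) (htd_tube y) h
      refine Or.inr (Or.inr (fun ht => ?_))
      have hdisj : ∀ z ∈ cutTube J m x, z ∉ cutTube J m y := by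
        intro z hz hz'
        exact (hnolink z (hcut_sub x hz) z (hcut_sub y hz')).1 rfl
      have hconvU : ∀ u ∈ cutTube J m x ∪ cutTube J m y,
          ∀ v ∈ cutTube J m x ∪ cutTube J m y, ∀ w : Fin n,
          (u:ℕ) ≤ (w:ℕ) → (w:ℕ) ≤ (v:ℕ) → w ∈ cutTube J m x ∪ cutTube J m y :=
        fun u hu v hv w h1 h2 => path_tube_convex ht hu hv h1 h2
      have final : ∀ c d : Fin n, (c:ℕ)+1=(d:ℕ) →
          ((c ∈ cutTube J m x ∧ d ∈ cutTube J m y) ∨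
           (c ∈ cutTube J m y ∧ d ∈ cutTube J m x)) → False := by
        rintro c d hcd (⟨hc, hd⟩ | ⟨hc, hd⟩)
        · exact (hnolink c (hcut_sub x hc) d (hcut_sub y hd)).2
            (path_adj_cyc (succ_adj_path hcd))
        · exact (hnolink d (hcut_sub x hd) c (hcut_sub y hc)).2
            (path_adj_cyc (succ_adj_path hcd)).symm
      rcases le_total (x:ℕ) (y:ℕ) with hxy | hxy
      · obtain ⟨c, d, hcd, hor⟩ :=
          crossing_aux hdisj hconvU (hcut_self x) (hcut_self y) hxy
        exact final c d hcd hor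
      · have hdisj' : ∀ z ∈ cutTube J m y, z ∉ cutTube J m x :=
          fun z hz hz' => hdisj z hz' hz
        have hconvU' : ∀ u ∈ cutTube J m y ∪ cutTube J m x,
            ∀ v ∈ cutTube J m y ∪ cutTube J m x, ∀ w : Fin n,
            (u:ℕ) ≤ (w:ℕ) → (w:ℕ) ≤ (v:ℕ) → w ∈ cutTube J m y ∪ cutTube J m x := by
          rw [Finset.union_comm]
          exact hconvU
        obtain ⟨c, d, hcd, hor⟩ :=
          crossing_aux hdisj' hconvU' (hcut_self y) (hcut_self x) hxy
        exact final c d hcd (hor.symm)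
  -- full compatibility
  have hcompat : ∀ x y : Fin n,
      TubeCompatible (pathGraph n) (cutTube J m x) (cutTube J m y) := by
    intro x y
    by_cases hx : x = m
    · refine Or.inr (Or.inl ?_)
      rw [hx, hcut_m]
      exact Finset.subset_univ _
    by_cases hy : y = m
    · refine Or.inl ?_
      rw [hy, hcut_m]
      exact Finset.subset_univ _
    rcases lt_or_gt_of_ne hx with h1 | h1 <;> rcases lt_or_gt_of_ne hy with h2 | h2
    · exact same_side x y _ _ (hcut_lt x h1) (hcut_lt y h2)
    · -- x < m < y
      refine Or.inr (Or.inr (fun ht => ?_))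
      have hmem : m ∈ cutTube J m x ∪ cutTube J m y := by
        refine path_tube_convex ht (Finset.mem_union_left _ (hcut_self x))
          (Finset.mem_union_right _ (hcut_self y)) ?_ ?_
        · exact le_of_lt (Fin.lt_def.mp h1)
        · exact le_of_lt (Fin.lt_def.mp h2)
      rcases Finset.mem_union.mp hmem with h' | h'
      · exact hm_notin_cut x hx h'
      · exact hm_notin_cut y hy h'
    · -- y < m < x
      refine Or.inr (Or.inr (fun ht => ?_))
      have hmem : m ∈ cutTube J m x ∪ cutTube J m y := by
        refine path_tube_convex ht (Finset.mem_union_right _ (hcut_self y))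
          (Finset.mem_union_left _ (hcut_self x)) ?_ ?_
        · exact le_of_lt (Fin.lt_def.mp h2)
        · exact le_of_lt (Fin.lt_def.mp h1)
      rcases Finset.mem_union.mp hmem with h' | h'
      · exact hm_notin_cut x hx h'
      · exact hm_notin_cut y hy h'
    · exact same_side x y _ _ (hcut_gt x h1) (hcut_gt y h2)
  -- CutTubing is a tubing
  have htubing : IsTubing (pathGraph n) (CutTubing J m) := by
    constructor
    · intro X hX
      obtain ⟨x, -, rfl⟩ := Finset.mem_image.mp hX
      exact hcut_tube x
    · intro X hX Y hY
      obtain ⟨x, -, rfl⟩ := Finset.mem_image.mp hX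
      obtain ⟨y, -, rfl⟩ := Finset.mem_image.mp hY
      exact hcompat x y
  have hcard1 : (CutTubing J m).card = n := by
    rw [CutTubing, Finset.card_image_of_injective _ hcut_inj, Finset.card_univ,
      Fintype.card_fin]
  have hcard2 : J.card = n := by
    have hJeq : J = Finset.image (tubingDown J) Finset.univ := by
      apply Finset.Subset.antisymm
      · intro X hX
        obtain ⟨x, -, hx⟩ := top_exists hJ.1 hX
        exact Finset.mem_image.mpr ⟨x, Finset.mem_univ x, hx⟩
      · intro X hX
        obtain ⟨x, -, rfl⟩ := Finset.mem_image.mp hX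
        exact htdJ x
    rw [hJeq, Finset.card_image_of_injective _ htd_inj, Finset.card_univ,
      Fintype.card_fin]
  refine ⟨⟨htubing, fun T' hT' hsub => ?_⟩, conj2, hcard1, hcard2⟩
  refine (Finset.eq_of_subset_of_card_le hsub ?_).symm
  rw [hcard1]
  exact tubing_card_le hT' m
/-- `Cut(J)` is a maximal tubing of the path; `cut_J` is injective on tubes, so
`|Cut(J)| = |J| = n`. -/
theorem cut_is_maxTubing (n : ℕ) (J : Finset (Finset (Fin n))) (m : Fin n)
    (hJ : IsMaxTubing (cycleGraph n) J) (hm : tubingDown J m = Finset.univ) :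
    IsMaxTubing (pathGraph n) (CutTubing J m) ∧
    (∀ x y : Fin n, cutTube J m x = cutTube J m y → tubingDown J x = tubingDown J y) ∧
    (CutTubing J m).card = n ∧ J.card = n := by
  exact cut_is_maxTubing' n J m hJ hm
end
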